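/- arXiv:2505.02128 — 13 statements merged into one kernel-verified Lean document; each statement's English description precedes it below -/
import Mathlib

section
/- Let q = 2^m with m a positive integer, and let a, b ∈ F_q be nonzero with a ≠ b. Then f(X) = X^{2q^2} + a X^{q^2+q-1} + b X^{q^2-q+1} is not a permutation of F_{q^3}, because f(a+b) = 0 = f(0) while a + b ≠ 0. -/
theorem stmt_3 (m : ℕ) (hm : 0 < m) (F : Type*) [Field F] [Fintype F]
    (hF : Fintype.card F = (2^m)^3)
    (a b : F) (haq : a^(2^m) = a) (hbq : b^(2^m) = b)
    (ha0 : a ≠ 0) (hb0 : b ≠ 0) (hab : a ≠ b)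
    (f : F → F)
    (hf : ∀ x : F, f x = x^(2*(2^m)^2) + a * (x^((2^m)^2) * x^(2^m) * x⁻¹)
        + b * (x^((2^m)^2) * x * (x^(2^m))⁻¹)) :
    f (a + b) = 0 ∧ f 0 = 0 ∧ a + b ≠ 0 ∧ ¬ Function.Bijective f := by
  -- characteristic 2
  have hcard : ((Fintype.card F : F)) = 0 := FiniteField.cast_card_eq_zero F
  have h2 : (2 : F) = 0 := by
    rw [hF] at hcard
    push_cast at hcard
    exact pow_eq_zero_iff (n := m * 3) (by positivity) |>.mp (by
      rw [pow_mul]; exact hcard)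
  have hchar : ringChar F = 2 := by
    have hdvd : ringChar F ∣ 2 := ringChar.dvd (by exact_mod_cast h2)
    rcases (Nat.dvd_prime Nat.prime_two).mp hdvd with h | h
    · exact absurd h (CharP.ringChar_ne_one (R := F))
    · exact h
  haveI : CharP F 2 := hchar ▸ ringChar.charP F
  haveI : ExpChar F 2 := ExpChar.prime Nat.prime_two
  have hs : (a + b) ^ (2 ^ m) = a + b := by
    rw [add_pow_char_pow, haq, hbq]
  have hsne : a + b ≠ 0 := by
    intro h
    apply hab
    have : a = -b := by linear_combination h
    rw [this, CharTwo.neg_eq]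
  have hs2 : (a + b) ^ ((2 ^ m) ^ 2) = a + b := by
    rw [pow_two, pow_mul, hs, hs]
  have hs3 : (a + b) ^ (2 * (2 ^ m) ^ 2) = (a + b) ^ 2 := by
    rw [mul_comm, pow_mul, hs2]
  have hfs : f (a + b) = 0 := by
    rw [hf, hs, hs2, hs3]
    field_simp
    linear_combination (a + b) ^ 2 * h2
  have h1 : 2 * (2 ^ m) ^ 2 ≠ 0 := by positivity
  have h2' : (2:ℕ) ^ m ≠ 0 := by positivity
  have h3 : ((2:ℕ) ^ m) ^ 2 ≠ 0 := by positivity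
  have hf0 : f 0 = 0 := by
    rw [hf]
    simp [zero_pow, h1, h2', h3]
  refine ⟨hfs, hf0, hsne, ?_⟩
  intro hbij
  exact hsne (hbij.injective (hfs.trans hf0.symm))
end

section
/- Let q = 2^m with m a positive integer, and let a, b ∈ F_q be nonzero with a ≠ b. Then f(X) = a X^{1+q} + b X^{1+q^2} + X^{2q^2+2q} is not a permutation of F_{q^3}: the element c = a^{1/2} + b^{1/2} (square roots in F_q) is nonzero and satisfies f(c) = 0 = f(0). -/
theorem stmt_5 (m : ℕ) (hm : 0 < m) (F : Type*) [Field F] [Fintype F]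
    (hF : Fintype.card F = (2^m)^3)
    (a b : F) (haq : a^(2^m) = a) (hbq : b^(2^m) = b)
    (ha0 : a ≠ 0) (hb0 : b ≠ 0) (hab : a ≠ b)
    (s t : F) (hs : s^2 = a) (ht : t^2 = b)
    (f : F → F)
    (hf : ∀ x : F, f x = a * x^(1 + 2^m) + b * x^(1 + (2^m)^2)
        + x^(2*(2^m)^2 + 2*2^m)) :
    s + t ≠ 0 ∧ f (s + t) = 0 ∧ f 0 = 0 ∧ ¬ Function.Bijective f := by
  -- characteristic 2
  have hcast : ((2:ℕ)^(m*3) : F) = 0 := by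
    have := FiniteField.cast_card_eq_zero F
    rw [hF] at this
    rw [← this]; push_cast; ring
  have h2 : (2 : F) = 0 := by
    have : ((2:F))^(m*3) = 0 := by push_cast at hcast; exact hcast
    have hm3 : m*3 ≠ 0 := by omega
    exact pow_eq_zero_iff hm3 |>.mp this
  haveI : CharP F (ringChar F) := ringChar.charP F
  have hprime : (ringChar F).Prime := CharP.char_is_prime F (ringChar F)
  have hdvd : ringChar F ∣ 2 := ringChar.dvd (by exact_mod_cast h2)
  have hchar : ringChar F = 2 :=
    (Nat.prime_dvd_prime_iff_eq hprime Nat.prime_two).mp hdvd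
  haveI hC : CharP F 2 := hchar ▸ ringChar.charP F
  have two : ∀ x : F, x + x = 0 := fun x => by
    have : (2:F) * x = 0 := by rw [h2, zero_mul]
    linear_combination this
  have hneg : ∀ x : F, -x = x := fun x => by
    rw [neg_eq_iff_add_eq_zero]; exact two x
  have hst : s ≠ t := by
    intro h; apply hab; rw [← hs, ← ht, h]
  have hc0 : s + t ≠ 0 := by
    intro h
    apply hst
    have hx : s = -t := eq_neg_of_add_eq_zero_left h
    rw [hx, hneg]
  have hfc : f (s + t) = 0 := by
    set c := s + t with hcdef
    have hsq : s^(2^m) = s := by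
      have h1 : (s^(2^m))^2 = s^2 := by
        rw [← pow_mul, mul_comm, pow_mul, hs, haq]
      have := sq_eq_sq_iff_eq_or_eq_neg.mp h1
      rcases this with h | h
      · exact h
      · rw [h, hneg]
    have htq : t^(2^m) = t := by
      have h1 : (t^(2^m))^2 = t^2 := by
        rw [← pow_mul, mul_comm, pow_mul, ht, hbq]
      have := sq_eq_sq_iff_eq_or_eq_neg.mp h1
      rcases this with h | h
      · exact h
      · rw [h, hneg]
    have hcq : c^(2^m) = c := by
      rw [hcdef, add_pow_char_pow, hsq, htq]
    have hcq2 : c^((2^m)^2) = c := by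
      rw [sq, pow_mul, hcq, hcq]
    have hc2 : c^2 = a + b := by
      rw [hcdef, add_sq, hs, ht]
      rw [show (2:F)*s*t = 0 by rw [h2, zero_mul, zero_mul]]
      ring
    rw [hf]
    rw [pow_add, pow_add, pow_add, pow_one,
        mul_comm 2 ((2^m)^2), mul_comm 2 (2^m), pow_mul, pow_mul, hcq, hcq2]
    have : a * (c * c) + b * (c * c) + c ^ 2 * c ^ 2 = (a + b + c^2) * c^2 := by
      ring
    rw [this, hc2]
    rw [show a + b + (a + b) = 0 from two _, zero_mul]
  have hf0 : f 0 = 0 := by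
    rw [hf]
    have e1 : 1 + 2^m ≠ 0 := by positivity
    have e2 : 1 + (2^m)^2 ≠ 0 := by positivity
    have e3 : 2*(2^m)^2 + 2*2^m ≠ 0 := by positivity
    rw [zero_pow e1, zero_pow e2, zero_pow e3]
    ring
  exact ⟨hc0, hfc, hf0, fun hbij => hc0 (hbij.injective (hfc.trans hf0.symm))⟩
end

section
/- Let q = 2^m with m a positive integer and a ∈ F_q nonzero. Then f(X) = a X^{1+q} + a X^{1+q^2} + X^{2q^2+2q} is a permutation polynomial of F_{q^3}. -/
-- Power maps with exponent coprime to card - 1 are injective on a finite field.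
lemma pow_inj_of_coprime {F : Type*} [Field F] [Fintype F] {n : ℕ}
    (hcard : 2 < Fintype.card F)
    (hn : n.Coprime (Fintype.card F - 1)) :
    Function.Injective (fun x : F => x ^ n) := by
  have hM : 1 < Fintype.card F - 1 := by omega
  have hn0 : 0 < n := by
    rcases Nat.eq_zero_or_pos n with rfl | h
    · exfalso
      have := Nat.coprime_zero_left (Fintype.card F - 1) |>.mp hn
      omega
    · exact h
  obtain ⟨k, -, hk⟩ := Nat.exists_mul_mod_eq_one_of_coprime hn hM
  have hk0 : 0 < n * k := by
    rcases Nat.eq_zero_or_pos (n * k) with h | h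
    · rw [h, Nat.zero_mod] at hk; omega
    · exact h
  have key : ∀ x : F, (x ^ n) ^ k = x := by
    intro x
    rw [← pow_mul]
    rcases eq_or_ne x 0 with rfl | hx
    · exact zero_pow (by omega)
    · have h1 := FiniteField.pow_card_sub_one_eq_one x hx
      conv_lhs => rw [← Nat.div_add_mod (n * k) (Fintype.card F - 1)]
      rw [hk, pow_add, pow_one, pow_mul, h1, one_pow, one_mul]
  intro x y h
  have := congrArg (· ^ k) h
  simpa [key x, key y] using this

lemma coprime_aux (m : ℕ) (hm : 0 < m) :
    Nat.Coprime (2 ^ m + (2 ^ m) ^ 2) ((2 ^ m) ^ 3 - 1) := by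
  set q := 2 ^ m with hq
  have hq2 : 2 ≤ q := by
    calc 2 = 2 ^ 1 := rfl
    _ ≤ 2 ^ m := Nat.pow_le_pow_right (by norm_num) hm
  have h2q : 2 ∣ q := by
    rw [hq]
    exact dvd_pow_self 2 (by omega)
  have hq3 : 8 ≤ q ^ 3 := by
    calc (8:ℕ) = 2 ^ 3 := by norm_num
    _ ≤ q ^ 3 := Nat.pow_le_pow_left hq2 3
  have h2q3 : 2 ∣ q ^ 3 := dvd_pow h2q (by norm_num)
  have hodd : ¬ 2 ∣ (q ^ 3 - 1) := by omega
  have h1 : Nat.Coprime q (q ^ 3 - 1) := by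
    rw [hq]
    apply Nat.Coprime.pow_left
    exact Nat.prime_two.coprime_iff_not_dvd.mpr hodd
  have hdvd : (q + 1) ∣ (q ^ 3 + 1) := by
    have : ((q : ℤ) + 1) ∣ ((q : ℤ) ^ 3 + 1) := ⟨(q : ℤ) ^ 2 - q + 1, by ring⟩
    have h' : ((q + 1 : ℕ) : ℤ) ∣ ((q ^ 3 + 1 : ℕ) : ℤ) := by push_cast; exact this
    exact_mod_cast Int.natCast_dvd_natCast.mp h'
  have h2 : Nat.Coprime (q + 1) (q ^ 3 - 1) := by
    rw [Nat.Coprime]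
    set d := Nat.gcd (q + 1) (q ^ 3 - 1) with hd
    have hd1 : d ∣ q + 1 := Nat.gcd_dvd_left _ _
    have hd2 : d ∣ q ^ 3 - 1 := Nat.gcd_dvd_right _ _
    have hd3 : d ∣ q ^ 3 + 1 := hd1.trans hdvd
    have hd4 : d ∣ 2 := by
      have := Nat.dvd_sub hd3 hd2
      have heq : q ^ 3 + 1 - (q ^ 3 - 1) = 2 := by omega
      rwa [heq] at this
    rcases (Nat.dvd_prime Nat.prime_two).mp hd4 with h | h
    · exact h
    · exfalso
      rw [h] at hd1
      omega
  have hexp : q + q ^ 2 = q * (q + 1) := by ring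
  rw [hexp]
  exact Nat.Coprime.mul h1 h2

theorem stmt_6 (m : ℕ) (hm : 0 < m) (F : Type*) [Field F] [Fintype F]
    (hF : Fintype.card F = (2^m)^3)
    (a : F) (haq : a^(2^m) = a) (ha0 : a ≠ 0) :
    Function.Bijective (fun x : F =>
      a * x^(1 + 2^m) + a * x^(1 + (2^m)^2) + x^(2*(2^m)^2 + 2*2^m)) := by
  set q := 2 ^ m with hqdef
  have hq2 : 2 ≤ q := by
    calc 2 = 2 ^ 1 := rfl
    _ ≤ 2 ^ m := Nat.pow_le_pow_right (by norm_num) hm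
  -- characteristic 2
  have hchar : CharP F 2 := by
    obtain ⟨n, hp, hcard⟩ := FiniteField.card F (ringChar F)
    have hdvd : ringChar F ∣ 2 ^ (m * 3) := by
      have : ringChar F ∣ Fintype.card F := by
        rw [hcard]
        exact dvd_pow_self _ (by positivity)
      rwa [hF, hqdef, ← pow_mul] at this
    have : ringChar F = 2 :=
      (Nat.prime_dvd_prime_iff_eq hp Nat.prime_two).mp (hp.dvd_of_dvd_pow hdvd)
    exact this ▸ ringChar.charP F
  haveI := hchar
  haveI : Fact (Nat.Prime 2) := ⟨Nat.prime_two⟩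
  have h2 : (2 : F) = 0 := by
    have := CharP.cast_eq_zero F 2
    exact_mod_cast this
  have frob : ∀ x y : F, (x + y) ^ q = x ^ q + y ^ q := fun x y => by
    rw [hqdef]; exact add_pow_char_pow x y 2 m
  have sq_add : ∀ x y : F, (x + y) ^ 2 = x ^ 2 + y ^ 2 := fun x y =>
    add_pow_char x y 2
  have hcube : ∀ x : F, x ^ (q ^ 3) = x := fun x => by
    rw [← hF]; exact FiniteField.pow_card x
  have pq2 : ∀ x : F, x ^ (q ^ 2) = (x ^ q) ^ q := fun x => by
    rw [pow_two q, pow_mul]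
  have haq2 : a ^ (q ^ 2) = a := by rw [pq2, haq, haq]
  -- squaring commutes with q-power
  have sqq : ∀ x : F, (x ^ 2) ^ q = (x ^ q) ^ 2 := fun x => by
    rw [← pow_mul, mul_comm 2 q, pow_mul]
  have sqq2 : ∀ x : F, (x ^ 2) ^ (q ^ 2) = (x ^ (q ^ 2)) ^ 2 := fun x => by
    rw [← pow_mul, mul_comm 2 (q ^ 2), pow_mul]
  -- kernel of the additive map P is trivial
  have ker : ∀ w : F, w ^ 2 + a * w + a * (w + w ^ q + w ^ (q ^ 2)) = 0 → w = 0 := by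
    intro w hw
    set t := w + w ^ q + w ^ (q ^ 2) with ht
    have htq : t ^ q = t := by
      rw [ht, frob, frob, ← pq2 w]
      have h3 : (w ^ (q ^ 2)) ^ q = w := by
        rw [← pow_mul, ← pow_succ]
        exact hcube w
      rw [h3]
      ring
    -- w^2 = a*w + a*t  (char 2)
    have hw2 : w ^ 2 = a * w + a * t := by
      have : w ^ 2 + (a * w + a * t) + (a * w + a * t) = 0 + (a * w + a * t) := by
        rw [← hw]; ring
      have hself : ∀ x : F, x + x = 0 := fun x => by
        rw [← two_smul F x, two_smul]
        linear_combination x * h2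
      calc w ^ 2 = w ^ 2 + (a * w + a * t) + (a * w + a * t) := by
            rw [add_assoc, hself, add_zero]
      _ = 0 + (a * w + a * t) := this
      _ = a * w + a * t := by rw [zero_add]
    have ht0 : t = 0 := by
      have hwq : (w ^ 2) ^ q = a * w ^ q + a * t := by
        rw [hw2, frob, mul_pow, mul_pow, haq, htq]
      have hwq2 : (w ^ 2) ^ (q ^ 2) = a * w ^ (q ^ 2) + a * t := by
        rw [pq2, hwq, frob, mul_pow, mul_pow, haq, htq, pq2 w]
      have ht2 : t ^ 2 = w ^ 2 + (w ^ 2) ^ q + (w ^ 2) ^ (q ^ 2) := by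
        rw [ht, sq_add, sq_add, ← sqq w, ← sqq2 w]
      rw [hwq, hwq2, hw2] at ht2
      have : t ^ 2 = 0 := by
        rw [ht2, ht]
        linear_combination (2 * a * (w + w ^ q + w ^ (q ^ 2))) * h2
      exact pow_eq_zero_iff (by norm_num) |>.mp this
    rw [ht0, mul_zero, add_zero] at hw
    have : w * (w + a) = 0 := by rw [← hw]; ring
    rcases mul_eq_zero.mp this with h | h
    · exact h
    · exfalso
      have hwa : w = a :=
        (eq_neg_of_add_eq_zero_left h).trans (CharTwo.neg_eq a)
      rw [hwa] at ht
      have : a + a ^ q + a ^ (q ^ 2) = 0 := by rw [← ht]; exact ht0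
      rw [haq, haq2] at this
      apply ha0
      calc a = a + (a + a) := by linear_combination (-a) * h2
      _ = 0 := by rw [← add_assoc]; exact this
  -- notation for the pieces
  have e1 : ∀ x : F, (x ^ (q + q ^ 2)) ^ q = x ^ (1 + q ^ 2) := by
    intro x
    rw [← pow_mul]
    have hexp : (q + q ^ 2) * q = q ^ 2 + q ^ 3 := by ring
    rw [hexp, pow_add, hcube x, pow_add, pow_one, mul_comm]
  have e2 : ∀ x : F, (x ^ (q + q ^ 2)) ^ (q ^ 2) = x ^ (1 + q) := by
    intro x
    rw [← pow_mul]
    have hexp : (q + q ^ 2) * q ^ 2 = q ^ 3 + q ^ 3 * q := by ring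
    rw [hexp, pow_add, hcube x, pow_mul, hcube x, pow_add, pow_one]
  have e3 : ∀ x : F, (x ^ (q + q ^ 2)) ^ 2 = x ^ (2 * q ^ 2 + 2 * q) := by
    intro x
    rw [← pow_mul]
    congr 1
    ring
  -- the key identity: f x = P (Q x)
  have ident : ∀ x : F,
      a * x ^ (1 + q) + a * x ^ (1 + q ^ 2) + x ^ (2 * q ^ 2 + 2 * q)
        = (x ^ (q + q ^ 2)) ^ 2 + a * x ^ (q + q ^ 2)
          + a * (x ^ (q + q ^ 2) + (x ^ (q + q ^ 2)) ^ q + (x ^ (q + q ^ 2)) ^ (q ^ 2)) := by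
    intro x
    rw [e1, e2, e3]
    linear_combination (-(a * x ^ (q + q ^ 2))) * h2
  -- injectivity of P
  have Pinj : ∀ u v : F,
      u ^ 2 + a * u + a * (u + u ^ q + u ^ (q ^ 2))
        = v ^ 2 + a * v + a * (v + v ^ q + v ^ (q ^ 2)) → u = v := by
    intro u v huv
    have hadd : (u + v) ^ 2 + a * (u + v)
        + a * ((u + v) + (u + v) ^ q + (u + v) ^ (q ^ 2)) = 0 := by
      rw [sq_add, pq2 (u + v), frob, frob, ← pq2 u, ← pq2 v]
      linear_combination huv + (v ^ 2 + a * v + a * (v + v ^ q + v ^ (q ^ 2))) * h2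
    have hw := ker (u + v) hadd
    have : u = -v := eq_neg_of_add_eq_zero_left hw
    rwa [CharTwo.neg_eq] at this
  -- injectivity of the power map Q
  have Qinj : Function.Injective (fun x : F => x ^ (q + q ^ 2)) := by
    apply pow_inj_of_coprime
    · rw [hF]
      have h8 : 8 ≤ q ^ 3 := by
        calc (8:ℕ) = 2 ^ 3 := by norm_num
        _ ≤ q ^ 3 := Nat.pow_le_pow_left hq2 3
      omega
    · rw [hF]
      exact coprime_aux m hm
  rw [Finite.injective_iff_bijective.symm]
  intro x y hxy
  simp only at hxy
  rw [ident x, ident y] at hxy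
  exact Qinj (Pinj _ _ hxy)
end

section
/- Let q = 2^m with m a positive integer. The map X ↦ X^{1+q} + X^{1+q^2} + X^{2q+2} is a permutation of F_{q^3} if and only if m is not congruent to 1 modulo 3. -/
lemma aux_pow_inj (F : Type*) [Field F] [Fintype F] (n : ℕ) (hn : 0 < n)
    (hc : Nat.Coprime n (Fintype.card F - 1)) :
    Function.Injective (fun x : F => x ^ n) := by
  intro a b hab
  simp only at hab
  rcases eq_or_ne b 0 with rfl | hb
  · simpa [zero_pow hn.ne', pow_eq_zero_iff hn.ne'] using hab
  rcases eq_or_ne a 0 with rfl | ha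
  · simp [zero_pow hn.ne'] at hab
    exact absurd hab.symm (pow_ne_zero n hb)
  have hc1 : (a * b⁻¹) ^ n = 1 := by
    rw [mul_pow, hab, inv_pow, mul_inv_cancel₀ (pow_ne_zero n hb)]
  have hc2 : (a * b⁻¹) ^ (Fintype.card F - 1) = 1 :=
    FiniteField.pow_card_sub_one_eq_one _ (by simp [ha, hb])
  have h1 : orderOf (a * b⁻¹) ∣ Nat.gcd n (Fintype.card F - 1) :=
    Nat.dvd_gcd (orderOf_dvd_of_pow_eq_one hc1) (orderOf_dvd_of_pow_eq_one hc2)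
  rw [hc] at h1
  have : a * b⁻¹ = 1 := orderOf_eq_one_iff.mp (Nat.dvd_one.mp h1)
  field_simp at this
  exact this

lemma aux_coprime (m : ℕ) (hm : 0 < m) : Nat.Coprime (1 + 2^m) ((2^m)^3 - 1) := by
  set q := 2^m with hq
  have hq2 : 2 ≤ q := by
    calc 2 = 2^1 := by norm_num
    _ ≤ 2^m := Nat.pow_le_pow_right (by norm_num) hm
  have hodd : Odd (1 + q) := by
    refine ⟨2^(m-1), ?_⟩
    have : q = 2 * 2^(m-1) := by
      rw [hq, ← pow_succ']
      congr 1
      omega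
    omega
  set d := Nat.gcd (1 + q) (q^3 - 1) with hd
  have h1 : d ∣ 1 + q := Nat.gcd_dvd_left _ _
  have h2 : d ∣ q^3 - 1 := Nat.gcd_dvd_right _ _
  have h3 : d ∣ q^3 + 1 := by
    have : (1+q) * (q^2 - q + 1) = q^3 + 1 := by
      have h4 : q ≤ q^2 := by nlinarith
      zify [h4, hq2]
      ring
    exact this ▸ Dvd.dvd.mul_right h1 _
  have h5 : d ∣ 2 := by
    have h7 : 1 ≤ q^3 := Nat.one_le_pow _ _ (by omega)
    have : q^3 + 1 - (q^3 - 1) = 2 := by omega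
    exact this ▸ Nat.dvd_sub h3 h2
  have hdle : d ≤ 2 := Nat.le_of_dvd (by norm_num) h5
  interval_cases d
  · simp only [Nat.Coprime]; omega
  · simp only [Nat.Coprime]; omega
  · exfalso
    have := Nat.dvd_of_mod_eq_zero (n := 1 + q) (m := 2) ?_
    · rcases hodd with ⟨k, hk⟩
      omega
    · have h6 : (2:ℕ) ∣ 1 + q := hd ▸ h1
      omega

lemma aux_mod7 (m : ℕ) : 2^m % 7 = 2^(m % 3) % 7 := by
  conv_lhs => rw [← Nat.div_add_mod m 3]
  rw [pow_add, pow_mul, Nat.mul_mod, Nat.pow_mod]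
  norm_num

theorem stmt_7 (m : ℕ) (hm : 0 < m) (F : Type*) [Field F] [Fintype F]
    (hF : Fintype.card F = (2^m)^3) :
    Function.Bijective (fun x : F =>
      x^(1 + 2^m) + x^(1 + (2^m)^2) + x^(2*2^m + 2)) ↔ m % 3 ≠ 1 := by
  -- characteristic 2
  classical
  have hp := CharP.char_is_prime F (ringChar F)
  obtain ⟨n, hn, hcardn⟩ := FiniteField.card F (ringChar F)
  have hchar : ringChar F = 2 := by
    have h1 : ringChar F ∣ 2 ^ (m*3) := by
      rw [← pow_mul] at hF
      rw [← hF, hcardn]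
      exact dvd_pow_self _ (by exact_mod_cast n.pos.ne')
    exact (Nat.prime_dvd_prime_iff_eq hp Nat.prime_two).mp (hp.dvd_of_dvd_pow h1)
  haveI : CharP F 2 := hchar ▸ ringChar.charP F
  haveI : Fact (Nat.Prime 2) := ⟨Nat.prime_two⟩
  have h2 : (2 : F) = 0 := by exact_mod_cast CharP.cast_eq_zero F 2
  have hfrob : ∀ (a b : F) (k : ℕ), (a + b)^(2^k) = a^(2^k) + b^(2^k) :=
    fun a b k => add_pow_char_pow a b 2 k
  set q := 2^m with hq
  have hq1 : 1 ≤ q := Nat.one_le_two_pow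
  have hpc : ∀ a : F, a ^ (q^3) = a := by
    intro a; rw [← hF]; exact FiniteField.pow_card a
  have hfrobq : ∀ a b : F, (a + b)^q = a^q + b^q := fun a b => hfrob a b m
  have hfrobq2 : ∀ a b : F, (a + b)^(q^2) = a^(q^2) + b^(q^2) := by
    intro a b
    have : q^2 = 2^(2*m) := by rw [hq, ← pow_mul, mul_comm]
    rw [this]; exact hfrob a b (2*m)
  have hsq : ∀ a b : F, (a + b)^2 = a^2 + b^2 := by
    intro a b
    have := hfrob a b 1
    norm_num at this
    exact this
  -- the linearized polynomial G
  set G : F → F := fun y => y^(q^2) + y^2 + y with hG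
  -- f x = G (x^(1+q))
  have hGf : ∀ x : F, x^(1 + q) + x^(1 + q^2) + x^(2*q + 2) = G (x^(1+q)) := by
    intro x
    simp only [hG]
    have e1 : (x^(1+q))^(q^2) = x^(1 + q^2) := by
      rw [← pow_mul]
      have : (1+q) * q^2 = q^2 + q^3 := by ring
      rw [this, pow_add, hq]
      rw [show x ^ (q^3) = x from hpc x]
      rw [pow_add, pow_one, mul_comm]
    have e2 : (x^(1+q))^2 = x^(2*q+2) := by
      rw [← pow_mul]; ring_nf
    rw [e1, e2]
    ring
  -- G is additive
  have hGadd : ∀ a b : F, G (a + b) = G a + G b := by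
    intro a b
    simp only [hG, hfrobq2, hsq]
    ring
  -- kernel analysis when m % 3 ≠ 1
  have hker : ∀ y : F, m % 3 ≠ 1 → G y = 0 → y = 0 := by
    intro y hm1 hy
    by_contra hy0
    simp only [hG] at hy
    have e1 : y^(q^2) = y^2 + y := by linear_combination hy - (y^2+y)*h2
    -- y^q = y^4 + y
    have hq2q2 : (y^(q^2))^(q^2) = y^q := by
      rw [← pow_mul]
      have : q^2 * q^2 = q * q^3 := by ring
      rw [this, pow_mul, hpc]
    have eA : y^q = y^4 + y := by
      rw [← hq2q2, e1, hfrobq2, ← pow_mul, mul_comm, pow_mul, e1]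
      linear_combination (y^3 + y^2) * h2
    -- y^(q^2) = y^16 + y
    have eB : y^(q^2) = y^16 + y := by
      have hstep : y^(q^2) = (y^q)^q := by
        have hh : q^2 = q * q := by ring
        rw [hh, pow_mul]
      rw [hstep, eA, hfrobq, ← pow_mul, mul_comm, pow_mul, eA]
      have e4 : (y^4 + y)^4 = y^16 + y^4 := by
        have : (y^4+y)^4 = ((y^4+y)^2)^2 := by ring
        rw [this, hsq, hsq]
        ring_nf
      rw [e4]
      linear_combination y^4 * h2
    have e16 : y^16 = y^2 := by
      have h := eB.symm.trans e1
      linear_combination h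
    have e8 : y^8 = y := by
      have h0 : (y^8 + y)^2 = 0 := by
        rw [hsq]
        linear_combination e16 + y^2 * h2
      have h1 := pow_eq_zero_iff (n := 2) (by norm_num) |>.mp h0
      linear_combination h1 - y * h2
    have e7 : y^7 = 1 := by
      have : y^7 * y = 1 * y := by rw [one_mul, ← pow_succ]; exact e8
      exact mul_right_cancel₀ hy0 this
    have hpowmod : ∀ k : ℕ, y^k = y^(k % 7) := by
      intro k
      conv_lhs => rw [← Nat.div_add_mod k 7]
      rw [pow_add, pow_mul, e7, one_pow, one_mul]
    rcases (by omega : m % 3 = 0 ∨ m % 3 = 2) with hm3 | hm3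
    · -- m % 3 = 0 : y^q = y
      have hq7 : q % 7 = 1 := by rw [hq, aux_mod7, hm3]; norm_num
      have hyq : y^q = y := by rw [hpowmod, hq7, pow_one]
      rw [eA] at hyq
      have h4 : y^4 = 0 := by linear_combination hyq
      exact hy0 (pow_eq_zero_iff (by norm_num : (4:ℕ) ≠ 0) |>.mp h4)
    · -- m % 3 = 2 : y^q = y^4
      have hq7 : q % 7 = 4 := by rw [hq, aux_mod7, hm3]; norm_num
      have hyq : y^q = y^4 := by rw [hpowmod, hq7]
      rw [eA] at hyq
      have h4 : y = 0 := by linear_combination -hyq + y*h2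
      exact hy0 h4
  -- injectivity of the power map x ↦ x^(1+q)
  have hh_inj : Function.Injective (fun x : F => x^(1+q)) := by
    apply aux_pow_inj F (1+q) (by omega)
    rw [hF]
    exact aux_coprime m hm
  constructor
  · -- bijective → m % 3 ≠ 1
    intro hbij hm1
    -- get an element of order 7 in Fˣ
    haveI : Fact (Nat.Prime 7) := ⟨by norm_num⟩
    have h7dvd : 7 ∣ Fintype.card Fˣ := by
      rw [Fintype.card_units, hF]
      have hq3 : q^3 = 2^(3*m) := by rw [hq, ← pow_mul, mul_comm]
      rw [hq3]
      have hmod : (2:ℕ)^(3*m) % 7 = 1 := by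
        rw [aux_mod7]
        have h30 : 3 * m % 3 = 0 := by omega
        rw [h30]
        norm_num
      have h1 : 1 ≤ (2:ℕ)^(3*m) := Nat.one_le_two_pow
      omega
    obtain ⟨ζ, hζ⟩ := exists_prime_orderOf_dvd_card 7 h7dvd
    set u : F := (ζ : F) with hu
    have hu0 : u ≠ 0 := by rw [hu]; exact Units.ne_zero ζ
    have hu7 : u^7 = 1 := by
      have h := pow_orderOf_eq_one ζ
      rw [hζ] at h
      rw [hu, ← Units.val_pow_eq_pow_val, h, Units.val_one]
    have hu1 : u ≠ 1 := by
      intro h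
      have hζ1 : ζ = 1 := Units.ext (by rw [Units.val_one, ← hu]; exact h)
      rw [hζ1, orderOf_one] at hζ
      norm_num at hζ
    -- factor u^7 + 1
    have hfac : (u+1) * ((u^3+u+1) * (u^3+u^2+1)) = 0 := by
      have : (u+1) * ((u^3+u+1) * (u^3+u^2+1)) = u^7 + 1 := by
        linear_combination (u^6+u^5+2*u^4+2*u^3+u^2+u) * h2
      rw [this, hu7]
      linear_combination h2
    have hu1' : u + 1 ≠ 0 := by
      intro h
      apply hu1
      linear_combination h - h2
    obtain ⟨y0, hy0ne, hy3⟩ : ∃ y0 : F, y0 ≠ 0 ∧ y0^3 + y0 + 1 = 0 := by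
      rcases mul_eq_zero.mp hfac with h | h
      · exact absurd h hu1'
      rcases mul_eq_zero.mp h with h | h
      · exact ⟨u, hu0, h⟩
      · refine ⟨u⁻¹, inv_ne_zero hu0, ?_⟩
        field_simp
        linear_combination h
    -- y0^7 = 1
    have hy7 : y0^7 = 1 := by
      linear_combination (y0+1)*(y0^3+y0^2+1)*hy3 -
        (1 + y0^6+y0^5+2*y0^4+2*y0^3+y0^2+y0)*h2
    have hy0mod : ∀ k : ℕ, y0^k = y0^(k % 7) := by
      intro k
      conv_lhs => rw [← Nat.div_add_mod k 7]
      rw [pow_add, pow_mul, hy7, one_pow, one_mul]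
    -- G y0 = 0
    have hGy0 : G y0 = 0 := by
      simp only [hG]
      have : y0^(q^2) = y0^4 := by
        have hqq : q^2 = 2^(2*m) := by rw [hq, ← pow_mul, mul_comm]
        rw [hqq, hy0mod, aux_mod7]
        have h2m : 2 * m % 3 = 2 := by omega
        rw [h2m]
        norm_num
      rw [this]
      linear_combination y0 * hy3
    -- find preimage of y0 under the power map
    obtain ⟨x0, hx0⟩ := (Finite.injective_iff_surjective.mp hh_inj) y0
    have hx0' : x0^(1+q) = y0 := hx0
    have hfx0 : x0^(1 + q) + x0^(1 + q^2) + x0^(2*q + 2) = 0 := by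
      rw [hGf, hx0', hGy0]
    have hf0 : (0:F)^(1 + q) + (0:F)^(1 + q^2) + (0:F)^(2*q + 2) = 0 := by
      rw [zero_pow (by omega), zero_pow (by omega), zero_pow (by omega)]
      ring
    have hx00 : x0 = 0 := hbij.injective (show x0^(1+q) + x0^(1+q^2) + x0^(2*q+2)
      = (0:F)^(1+q) + (0:F)^(1+q^2) + (0:F)^(2*q+2) by rw [hfx0, hf0])
    rw [hx00, zero_pow (by omega : 1 + q ≠ 0)] at hx0'
    exact hy0ne hx0'.symm
  · -- m % 3 ≠ 1 → bijective
    intro hm1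
    rw [Fintype.bijective_iff_injective_and_card]
    refine ⟨?_, rfl⟩
    intro a b hab
    simp only at hab
    apply hh_inj
    simp only
    have hkey : G (a^(1+q) + b^(1+q)) = 0 := by
      rw [hGadd, ← hGf, ← hGf, hab]
      have : ∀ c : F, c + c = 0 := fun c => by linear_combination c * h2
      exact this _
    have := hker _ hm1 hkey
    linear_combination this - (b^(1+q)) * h2
end

section
/- Let q = 2^m with m a positive integer. The additive (2-linearized) map L_1(X) = X + X^2 + X^{q^2} on F_{q^3} is bijective if and only if m is not congruent to 1 modulo 3. -/
lemma pow_two_pow_mod3 {F : Type*} [Monoid F] (x : F) (hx : x ^ 8 = x) (k : ℕ) :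
    x ^ (2 ^ k) = x ^ (2 ^ (k % 3)) := by
  have h8 : ∀ a : ℕ, x ^ (8 ^ a) = x := by
    intro a
    induction a with
    | zero => simp
    | succ n ih => rw [pow_succ, pow_mul, ih, hx]
  conv_lhs => rw [show k = 3 * (k / 3) + k % 3 by omega]
  rw [pow_add, pow_mul, show (2:ℕ) ^ (3 * (k / 3)) = 8 ^ (k / 3) from by norm_num [pow_mul], h8]

theorem stmt_9 (m : ℕ) (hm : 0 < m) (F : Type*) [Field F] [Fintype F]
    (hF : Fintype.card F = (2^m)^3) :
    Function.Bijective (fun x : F => x + x^2 + x^((2^m)^2)) ↔ m % 3 ≠ 1 := by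
  classical
  have hF' : Fintype.card F = 2 ^ (m * 3) := by rw [hF, ← pow_mul]
  -- characteristic 2
  have hp2 : CharP F 2 := by
    obtain ⟨p, hpi⟩ := CharP.exists F
    haveI := hpi
    obtain ⟨n, hp, hcard⟩ := FiniteField.card F p
    have hdp : p ∣ 2 ^ (m * 3) := by
      rw [← hF', hcard]
      exact dvd_pow_self p n.ne_zero
    have hpd2 : p ∣ 2 := hp.dvd_of_dvd_pow hdp
    have hpe : p = 2 := (Nat.prime_dvd_prime_iff_eq hp Nat.prime_two).mp hpd2
    rwa [hpe] at hpi
  haveI := hp2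
  have h2 : (2 : F) = 0 := by
    have := CharP.cast_eq_zero F 2
    simpa using this
  have hq2eq : (2:ℕ) ^ (m * 2) = (2 ^ m) ^ 2 := by rw [← pow_mul]
  have hpowpow : ∀ a b : ℕ, (x : F) → (x ^ ((2:ℕ) ^ a)) ^ ((2:ℕ) ^ b) = x ^ ((2:ℕ) ^ (a + b)) := by
    intro a b x
    rw [← pow_mul, ← pow_add]
  have hadd : ∀ (y z : F) (k : ℕ), (y + z) ^ ((2:ℕ) ^ k) = y ^ ((2:ℕ) ^ k) + z ^ ((2:ℕ) ^ k) := by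
    intro y z k
    exact add_pow_char_pow y z 2 k
  have hrc : ∀ (x : F) (a k : ℕ), (x ^ a) ^ ((2:ℕ) ^ k) = (x ^ ((2:ℕ) ^ k)) ^ a := by
    intro x a k
    rw [← pow_mul, mul_comm, pow_mul]
  -- key : a nonzero kernel element forces m % 3 = 1
  have key : ∀ x : F, x ≠ 0 → x + x ^ 2 + x ^ ((2:ℕ) ^ (m * 2)) = 0 → m % 3 = 1 := by
    intro x hx0 hx
    have h3m : x ^ ((2:ℕ) ^ (m * 3)) = x := by rw [← hF']; exact FiniteField.pow_card x
    have hq2 : x ^ ((2:ℕ) ^ (m * 2)) = x + x ^ 2 := by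
      linear_combination hx - (x + x ^ 2) * h2
    -- step A : x^(2^(4m)) = x + x^4
    have hA : x ^ ((2:ℕ) ^ (m * 4)) = x + x ^ 4 := by
      have hstep : (x ^ ((2:ℕ) ^ (m * 2))) ^ ((2:ℕ) ^ (m * 2))
          = (x + x ^ 2) ^ ((2:ℕ) ^ (m * 2)) := by rw [hq2]
      rw [hpowpow, show m * 2 + m * 2 = m * 4 by ring, hadd, hrc, hq2] at hstep
      linear_combination hstep + (x ^ 2 + x ^ 3) * h2
    -- step B : x = x + x^2 + x^4 + x^8 (mod 2)
    have hB : x ^ 2 + x ^ 4 + x ^ 8 = 0 := by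
      have hstep : (x ^ ((2:ℕ) ^ (m * 4))) ^ ((2:ℕ) ^ (m * 2))
          = (x + x ^ 4) ^ ((2:ℕ) ^ (m * 2)) := by rw [hA]
      rw [hpowpow, show m * 4 + m * 2 = m * 3 + m * 3 by ring,
        ← hpowpow (m * 3) (m * 3) x, h3m, h3m, hadd, hrc, hq2] at hstep
      linear_combination (-1 : F) * hstep - (2 * x ^ 5 + 3 * x ^ 6 + 2 * x ^ 7) * h2
    have hsq : (x + x ^ 2 + x ^ 4) ^ 2 = 0 := by
      linear_combination hB + (x ^ 3 + x ^ 5 + x ^ 6) * h2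
    have hsum : x + x ^ 2 + x ^ 4 = 0 := by
      exact pow_eq_zero_iff (two_ne_zero) |>.mp hsq
    have hcube : x ^ 3 + x + 1 = 0 := by
      have hmul : x * (x ^ 3 + x + 1) = 0 := by linear_combination hsum
      rcases mul_eq_zero.mp hmul with h | h
      · exact absurd h hx0
      · exact h
    have hx3 : x ^ 3 = x + 1 := by linear_combination hcube - (x + 1) * h2
    have hx8 : x ^ 8 = x := by
      linear_combination (x ^ 5 + x ^ 3 + x ^ 2 + x + 2) * hx3 + (1 + x + x ^ 2) * h2
    have hper := pow_two_pow_mod3 x hx8 (m * 2)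
    rw [hq2] at hper
    have hr : (m * 2) % 3 = 0 ∨ (m * 2) % 3 = 1 ∨ (m * 2) % 3 = 2 := by omega
    rcases hr with h | h | h
    · rw [h] at hper
      simp only [pow_zero, pow_one] at hper
      have hx20 : x ^ 2 = 0 := by linear_combination hper
      exact absurd (pow_eq_zero_iff (two_ne_zero) |>.mp hx20) hx0
    · rw [h] at hper
      norm_num at hper
      have hxx : x = 0 := by linear_combination hper
      exact absurd hxx hx0
    · omega
  constructor
  · -- bijective → m % 3 ≠ 1
    intro hbij hm1
    -- helper: x ≠ 0 with x^3 = x + 1 contradicts injectivity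
    have hker : ∀ x : F, x ≠ 0 → x ^ 3 = x + 1 → False := by
      intro x hx0 hx3
      have hx4 : x ^ 4 = x + x ^ 2 := by linear_combination x * hx3
      have hx8 : x ^ 8 = x := by
        linear_combination (x ^ 5 + x ^ 3 + x ^ 2 + x + 2) * hx3 + (1 + x + x ^ 2) * h2
      have hper := pow_two_pow_mod3 x hx8 (m * 2)
      have h23 : (m * 2) % 3 = 2 := by omega
      rw [h23] at hper
      have hfx : x + x ^ 2 + x ^ ((2 ^ m) ^ 2) = 0 := by
        rw [← hq2eq, hper]
        norm_num
        linear_combination hx4 + (x + x ^ 2) * h2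
      have hexp0 : ((2 ^ m : ℕ)) ^ 2 ≠ 0 := by positivity
      have h0 : (fun x : F => x + x ^ 2 + x ^ ((2^m)^2)) x
          = (fun x : F => x + x ^ 2 + x ^ ((2^m)^2)) 0 := by
        simp only
        rw [hfx, zero_pow hexp0]
        norm_num
      exact hx0 (hbij.injective h0)
    -- get an element of order 7 in Fˣ
    haveI : Fact (Nat.Prime 7) := ⟨by norm_num⟩
    have h7 : (7:ℕ) ∣ Fintype.card Fˣ := by
      rw [Fintype.card_units, hF']
      have hd : (8:ℕ) - 1 ∣ 8 ^ m - 1 ^ m := Nat.sub_dvd_pow_sub_pow 8 1 m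
      have h8m : (8:ℕ) ^ m = 2 ^ (m * 3) := by
        rw [show (8:ℕ) = 2 ^ 3 from rfl, ← pow_mul, Nat.mul_comm]
      simpa [h8m] using hd
    obtain ⟨u, hu⟩ := exists_prime_orderOf_dvd_card 7 h7
    set v : F := (u : F) with hv
    have hv7 : v ^ 7 = 1 := by
      have h := pow_orderOf_eq_one u
      rw [hu] at h
      rw [hv, ← Units.val_pow_eq_pow_val, h, Units.val_one]
    have hvne1 : v ≠ 1 := by
      intro h
      have hu1 : u = 1 := Units.ext (by rw [Units.val_one]; exact h)
      rw [hu1] at hu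
      simp at hu
    have hvne0 : v ≠ 0 := u.ne_zero
    have hsplit : (v + 1) * ((v ^ 3 + v + 1) * (v ^ 3 + v ^ 2 + 1)) = 0 := by
      linear_combination hv7 + (1 + v + v ^ 2 + 2 * v ^ 3 + 2 * v ^ 4 + v ^ 5 + v ^ 6) * h2
    have hvp1 : v + 1 ≠ 0 := by
      intro h
      apply hvne1
      linear_combination h - h2
    rcases mul_eq_zero.mp hsplit with h | h
    · exact absurd h hvp1
    rcases mul_eq_zero.mp h with hc | hc
    · exact hker v hvne0 (by linear_combination hc - (v + 1) * h2)
    · refine hker (v ^ 6) (pow_ne_zero 6 hvne0) ?_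
      linear_combination (v ^ 4 + v ^ 11) * hv7 + (v ^ 3 - v ^ 2 + 2 * v - 3) * hc +
        (1 - v + 2 * v ^ 2 - v ^ 6) * h2
  · -- m % 3 ≠ 1 → bijective
    intro hm1
    rw [← Finite.injective_iff_bijective]
    intro a b hab
    simp only at hab
    by_contra hne
    have hx0 : a - b ≠ 0 := sub_ne_zero_of_ne hne
    have hx : (a - b) + (a - b) ^ 2 + (a - b) ^ ((2:ℕ) ^ (m * 2)) = 0 := by
      have h1 : (a - b) ^ 2 = a ^ 2 - b ^ 2 := by
        have := sub_pow_char_pow a b 1 (p := 2)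
        simpa using this
      have h2' : (a - b) ^ ((2:ℕ) ^ (m * 2)) = a ^ ((2:ℕ) ^ (m * 2)) - b ^ ((2:ℕ) ^ (m * 2)) :=
        sub_pow_char_pow a b (m * 2) (p := 2)
      rw [h1, h2', hq2eq]
      linear_combination hab
    exact hm1 (key _ hx0 hx)
end

section
/- Let q = 2^m with m a positive integer. The additive (2-linearized) map L_2(X) = X + X^2 + X^{q} on F_{q^3} is bijective if and only if m is not congruent to 2 modulo 3. -/
/-- If `x^8 = x` then `x^(2^m) = x^(2^(m % 3))`. -/
lemma pow8_pow_mod3 {F : Type*} [Monoid F] (x : F) (h8 : x ^ 8 = x) (m : ℕ) :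
    x ^ (2 ^ m) = x ^ (2 ^ (m % 3)) := by
  have key : ∀ k, x ^ (2 ^ (3 * k)) = x := by
    intro k
    induction k with
    | zero => simp
    | succ k ih =>
      have h3 : 3 * (k + 1) = 3 * k + 3 := by ring
      rw [h3, pow_add, pow_mul, ih]
      norm_num
      exact h8
  conv_lhs => rw [← Nat.div_add_mod m 3, pow_add, pow_mul, key]

/-- Kernel lemma: a nonzero kernel element of `x + x² + x^(2^m)` forces `m % 3 = 2`. -/
lemma ker_mod (m : ℕ) {F : Type*} [Field F] [Fintype F] [CharP F 2]
    (hF : Fintype.card F = (2 ^ m) ^ 3)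
    (x : F) (hx : x ≠ 0) (hL : x + x ^ 2 + x ^ (2 ^ m) = 0) : m % 3 = 2 := by
  have h2 : (2 : F) = 0 := by exact_mod_cast CharP.cast_eq_zero F 2
  have h1 : x ^ (2 ^ m) = x + x ^ 2 := by
    linear_combination hL - (x + x ^ 2) * h2
  have hq2 : (x ^ (2 ^ m)) ^ (2 ^ m) = x + x ^ 4 := by
    rw [h1, add_pow_char_pow, ← pow_mul, mul_comm 2 (2 ^ m), pow_mul, h1]
    linear_combination (x ^ 3 + x ^ 2) * h2
  have hq3 : ((x ^ (2 ^ m)) ^ (2 ^ m)) ^ (2 ^ m) = x + x ^ 2 + x ^ 4 + x ^ 8 := by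
    rw [hq2, add_pow_char_pow, ← pow_mul, mul_comm 4 (2 ^ m), pow_mul, h1]
    linear_combination (2 * x ^ 7 + 3 * x ^ 6 + 2 * x ^ 5) * h2
  have hcard : ((x ^ (2 ^ m)) ^ (2 ^ m)) ^ (2 ^ m) = x := by
    rw [← pow_mul, ← pow_mul, show 2 ^ m * (2 ^ m * 2 ^ m) = (2 ^ m) ^ 3 from by ring, ← hF]
    exact FiniteField.pow_card x
  have heq : x + x ^ 2 + x ^ 4 + x ^ 8 = x := by rw [← hq3, hcard]
  have hsq : (x * (x ^ 3 + x + 1)) ^ 2 = 0 := by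
    linear_combination heq + (x ^ 6 + x ^ 5 + x ^ 3) * h2
  have hmul : x * (x ^ 3 + x + 1) = 0 :=
    pow_eq_zero_iff (by norm_num : (2:ℕ) ≠ 0) |>.mp hsq
  have h6 : x ^ 3 + x + 1 = 0 := by
    rcases mul_eq_zero.mp hmul with h | h
    · exact absurd h hx
    · exact h
  have hx3 : x ^ 3 = x + 1 := by linear_combination h6 - (x + 1) * h2
  have h8 : x ^ 8 = x := by
    linear_combination (x ^ 5 + x ^ 3 + x ^ 2 + x + 2) * hx3 + (x ^ 2 + x + 1) * h2
  have hqr : x ^ (2 ^ m) = x ^ (2 ^ (m % 3)) := pow8_pow_mod3 x h8 m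
  have hr : m % 3 = 0 ∨ m % 3 = 1 ∨ m % 3 = 2 := by omega
  rcases hr with hr | hr | hr
  · exfalso
    rw [hr] at hqr
    simp only [pow_zero, pow_one] at hqr
    rw [hqr] at h1
    have : x ^ 2 = 0 := by linear_combination - h1
    exact hx (pow_eq_zero_iff (by norm_num : (2:ℕ) ≠ 0) |>.mp this)
  · exfalso
    rw [hr] at hqr
    norm_num at hqr
    rw [hqr] at h1
    have : x = 0 := by linear_combination - h1
    exact hx this
  · exact hr

theorem stmt_10 (m : ℕ) (hm : 0 < m) (F : Type*) [Field F] [Fintype F]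
    (hF : Fintype.card F = (2^m)^3) :
    Function.Bijective (fun x : F => x + x^2 + x^(2^m)) ↔ m % 3 ≠ 2 := by
  -- establish characteristic 2
  haveI : CharP F (ringChar F) := ringChar.charP F
  obtain ⟨n, hprime, hcard⟩ := FiniteField.card F (ringChar F)
  have hchar2 : ringChar F = 2 := by
    have hd : ringChar F ∣ 2 ^ (m * 3) := by
      rw [pow_mul, ← hF, hcard]
      exact dvd_pow_self _ (by exact_mod_cast n.ne_zero)
    have := hprime.dvd_of_dvd_pow hd
    exact (Nat.prime_dvd_prime_iff_eq hprime Nat.prime_two).mp this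
  haveI : CharP F 2 := hchar2 ▸ ringChar.charP F
  have h2 : (2 : F) = 0 := by exact_mod_cast CharP.cast_eq_zero F 2
  classical
  constructor
  · -- bijective → m % 3 ≠ 2
    intro hbij hm2
    -- find an element of order 7
    haveI : Fact (Nat.Prime 7) := ⟨by norm_num⟩
    have h7 : 7 ∣ Fintype.card Fˣ := by
      rw [Fintype.card_units, hF]
      have h8m : (2 ^ m) ^ 3 = 8 ^ m := by
        rw [← pow_mul, mul_comm, pow_mul]; norm_num
      rw [h8m]
      have := Nat.sub_dvd_pow_sub_pow 8 1 m
      simpa using this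
    obtain ⟨ζ, hζ⟩ := exists_prime_orderOf_dvd_card 7 h7
    set z : F := (ζ : F) with hzdef
    have hz7' : ζ ^ 7 = 1 := by rw [← hζ]; exact pow_orderOf_eq_one ζ
    have hz7 : z ^ 7 = 1 := by
      have h := congrArg (Units.val) hz7'
      simpa using h
    have hz0 : z ≠ 0 := ζ.ne_zero
    have hz1 : z ≠ 1 := by
      intro h
      have h1 : ζ = 1 := Units.ext h
      rw [h1, orderOf_one] at hζ
      norm_num at hζ
    have hsum : z ^ 6 + z ^ 5 + z ^ 4 + z ^ 3 + z ^ 2 + z + 1 = 0 := by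
      have hmul : (z - 1) * (z ^ 6 + z ^ 5 + z ^ 4 + z ^ 3 + z ^ 2 + z + 1) = 0 := by
        linear_combination hz7
      rcases mul_eq_zero.mp hmul with h | h
      · exact absurd (sub_eq_zero.mp h) hz1
      · exact h
    have hfac : (z ^ 3 + z + 1) * (z ^ 3 + z ^ 2 + 1) = 0 := by
      linear_combination hsum + z ^ 3 * h2
    -- produce x with x³ + x + 1 = 0
    have hexists : ∃ x : F, x ≠ 0 ∧ x ^ 3 + x + 1 = 0 := by
      rcases mul_eq_zero.mp hfac with h | h
      · exact ⟨z, hz0, h⟩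
      · refine ⟨z⁻¹, inv_ne_zero hz0, ?_⟩
        field_simp
        linear_combination h
    obtain ⟨x, hx0, hx3⟩ := hexists
    have hx3' : x ^ 3 = x + 1 := by linear_combination hx3 - (x + 1) * h2
    have h8 : x ^ 8 = x := by
      linear_combination (x ^ 5 + x ^ 3 + x ^ 2 + x + 2) * hx3' + (x ^ 2 + x + 1) * h2
    have hq4 : x ^ (2 ^ m) = x ^ 4 := by
      rw [pow8_pow_mod3 x h8 m, hm2]
      norm_num
    have hLx : x + x ^ 2 + x ^ (2 ^ m) = 0 := by
      rw [hq4]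
      linear_combination x * hx3' + (x ^ 2 + x) * h2
    have hL0 : (fun x : F => x + x ^ 2 + x ^ (2 ^ m)) x
        = (fun x : F => x + x ^ 2 + x ^ (2 ^ m)) 0 := by
      simp only []
      rw [hLx, zero_pow (by positivity : 2 ^ m ≠ 0)]
      norm_num
    exact hx0 (hbij.injective hL0)
  · -- m % 3 ≠ 2 → bijective
    intro hne
    rw [← Finite.injective_iff_bijective]
    intro a b hab
    simp only [] at hab
    by_contra hne'
    have hx0 : a - b ≠ 0 := sub_ne_zero.mpr hne'
    have hab' : a - b = a + b := by linear_combination - b * h2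
    have hL : (a - b) + (a - b) ^ 2 + (a - b) ^ (2 ^ m) = 0 := by
      rw [hab', add_pow_char_pow]
      linear_combination hab + (b + b ^ 2 + a * b + b ^ (2 ^ m)) * h2
    exact hne (ker_mod m hF (a - b) hx0 hL)
end

section
/- Let n = 3m with m a positive integer not congruent to 1 modulo 3, and let ω be a primitive n-th root of unity in an algebraic closure of F_2. Then for every j with 0 ≤ j ≤ n-1, 1 + ω^j + ω^{2mj} ≠ 0. -/
theorem stmt_11 (m : ℕ) (hm : 0 < m) (hm3 : m % 3 ≠ 1)
    (K : Type*) [Field K] [CharP K 2] (ω : K) (hω : orderOf ω = 3 * m) :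
    ∀ j : ℕ, j ≤ 3 * m - 1 → 1 + ω^j + ω^(2*m*j) ≠ 0 := by
  intro j hj h
  have hpow : ω ^ (3*m) = 1 := by rw [← hω]; exact pow_orderOf_eq_one ω
  have hωne : ω ≠ 0 := by
    intro h0
    rw [h0, zero_pow (by omega : 3*m ≠ 0)] at hpow
    exact zero_ne_one hpow
  set ζ := ω ^ m with hζdef
  have hζ3 : ζ ^ 3 = 1 := by rw [hζdef, ← pow_mul, mul_comm]; exact hpow
  have hζne1 : ζ ≠ 1 := by
    intro h1
    have hd := orderOf_dvd_of_pow_eq_one (h1 : ω ^ m = 1)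
    rw [hω] at hd
    have := Nat.le_of_dvd hm hd
    omega
  have hquad : ζ^2 + ζ + 1 = 0 := by
    have hfac : (ζ - 1) * (ζ^2 + ζ + 1) = 0 := by
      have : (ζ - 1) * (ζ^2 + ζ + 1) = ζ^3 - 1 := by ring
      rw [this, hζ3, sub_self]
    rcases mul_eq_zero.mp hfac with h' | h'
    · exact absurd (by linear_combination h' : ζ = 1) hζne1
    · exact h'
  have h2K : (2 : K) = 0 := by
    have := CharP.cast_eq_zero K 2
    exact_mod_cast this
  -- equal powers of ω give congruence mod 3
  have hu : ∀ a b : ℕ, ω^a = ω^b → a % 3 = b % 3 := by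
    intro a b hab
    set u : Kˣ := Units.mk0 ω hωne with hudef
    have h1 : u^a = u^b := Units.ext (by simp [hudef, hab])
    have hmod : a ≡ b [MOD orderOf u] := pow_eq_pow_iff_modEq.mp h1
    have houu : orderOf u = 3*m := by
      rw [← hω, ← orderOf_units]; rfl
    rw [houu] at hmod
    exact hmod.of_dvd ⟨m, rfl⟩
  have hexp : ω^(2*m*j) = ζ^(2*j) := by
    rw [hζdef, ← pow_mul]
    congr 1
    ring
  obtain ⟨q, r, hr, hjqr⟩ : ∃ q r, r < 3 ∧ j = 3*q + r :=
    ⟨j/3, j%3, Nat.mod_lt _ (by norm_num), (Nat.div_add_mod j 3).symm⟩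
  have hζ2j : ζ^(2*j) = ζ^(2*r) := by
    rw [hjqr]
    have : 2*(3*q+r) = 3*(2*q) + 2*r := by ring
    rw [this, pow_add, pow_mul, hζ3, one_pow, one_mul]
  rw [hexp, hζ2j] at h
  have hjr : j % 3 = r := by omega
  interval_cases r
  · -- r = 0 : ω^j = 0, impossible
    have hz : ω^j = 0 := by
      have h0 : (1:K) + ω^j + 1 = 0 := by simpa using h
      linear_combination h0 - h2K
    exact pow_ne_zero j hωne hz
  · -- r = 1 : ω^j = ζ = ω^m
    have hz : ω^j = ω^m := by
      rw [← hζdef]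
      linear_combination h - hquad
    have := hu j m hz
    omega
  · -- r = 2 : ω^j = ζ^2 = ω^(2m)
    have hz : ω^j = ω^(2*m) := by
      have hz2 : ω^j = ζ^2 := by linear_combination h - hquad + ζ * hζ3 + (ζ - ζ^4) * h2K
      rw [hz2, hζdef, ← pow_mul, mul_comm]
    have := hu j (2*m) hz
    omega
end

section
/- Let q = p^m with p an odd prime, and let A ∈ F_{q^3}. For X ∈ F_{q^3}, writing f_5(X) = 2X^{q^2} + X^{q^2-q+1} + X^{q^2+q-1} (interpreted for X ≠ 0; f_5(0)=0), one has the identity f_5(X)^{q^2+1} = (X + X^q + X^{q^2} + X^{q^2+q-1})^2 for all nonzero X ∈ F_{q^3}. -/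
theorem stmt_14 (p m : ℕ) (hp : p.Prime) (hodd : Odd p) (hm : 0 < m)
    (F : Type*) [Field F] [Fintype F] (hF : Fintype.card F = (p^m)^3)
    (f : F → F)
    (hf : ∀ x : F, f x = 2 * x^((p^m)^2) + x^((p^m)^2) * x * (x^(p^m))⁻¹
        + x^((p^m)^2) * x^(p^m) * x⁻¹) :
    ∀ x : F, x ≠ 0 →
      (f x)^((p^m)^2 + 1)
        = (x + x^(p^m) + x^((p^m)^2) + x^((p^m)^2) * x^(p^m) * x⁻¹)^2 := by
  intro x hx
  have hchar : CharP F p := by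
    obtain ⟨p', hcp'⟩ := CharP.exists F
    haveI := hcp'
    obtain ⟨n, hp', hcard⟩ := FiniteField.card F p'
    rw [hF, ← pow_mul] at hcard
    have hple : p = p' := by
      have hdvd : p ∣ p' ^ (n : ℕ) := hcard ▸ dvd_pow_self p (by positivity)
      exact ((Nat.prime_dvd_prime_iff_eq hp hp').mp (hp.dvd_of_dvd_pow hdvd))
    exact hple ▸ hcp'
  haveI := hchar
  haveI := Fact.mk hp
  have hq2 : (p^m)^2 = p^(m*2) := by rw [pow_mul]
  have hx3 : x ^ ((p^m)^3) = x := by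
    have := FiniteField.pow_card x
    rwa [hF] at this
  have hb : x^(p^m) ≠ 0 := pow_ne_zero _ hx
  have hc : x^((p^m)^2) ≠ 0 := pow_ne_zero _ hx
  have h1 : (x^((p^m)^2))^((p^m)^2) = x^(p^m) := by
    rw [← pow_mul]
    have h : (p^m)^2 * (p^m)^2 = (p^m)^3 * (p^m) := by ring
    rw [h, pow_mul, hx3]
  have h2 : (x^(p^m))^((p^m)^2) = x := by
    rw [← pow_mul]
    have h : (p^m) * (p^m)^2 = (p^m)^3 := by ring
    rw [h, hx3]
  have key : (f x)^((p^m)^2)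
      = (x^(p^m) + x^(p^m)) + x^(p^m) * x^((p^m)^2) * x⁻¹
        + x^(p^m) * x * (x^((p^m)^2))⁻¹ := by
    conv_lhs => rw [hf, two_mul, hq2, add_pow_char_pow, add_pow_char_pow,
      add_pow_char_pow, mul_pow, mul_pow, mul_pow, mul_pow, inv_pow, inv_pow,
      ← hq2, h1, h2]
  rw [pow_succ, key, hf]
  field_simp
  ring
end

section
/- Let q = p^m with p an odd prime. Then f_5(X) = 2X^{q^2} + X^{q^2-q+1} + X^{q^2+q-1} is a permutation of F_{q^3} (with f_5(0) = 0 and for X ≠ 0 the negative-exponent terms interpreted via X^{-1}). -/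
private theorem key_step {F : Type*} [Field F] {q : ℕ} (hq0 : q ≠ 0)
    (hadd : ∀ u v : F, (u + v) ^ q = u ^ q + v ^ q)
    (hcube : ∀ x : F, ((x ^ q) ^ q) ^ q = x)
    (h2 : (2 : F) ≠ 0)
    (hneg : ∀ x : F, (-x) ^ q = -(x ^ q))
    (hsne : ∀ A : F, A ≠ 0 → A + A ^ q ≠ 0)
    {X Y : F} (hX : X ≠ 0) (hY : Y ≠ 0)
    (hv : (X ^ q) ^ q * (X + X ^ q) ^ 2 * (X * X ^ q)⁻¹
        = (Y ^ q) ^ q * (Y + Y ^ q) ^ 2 * (Y * Y ^ q)⁻¹) :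
    X = Y := by
  have hsX := hsne X hX
  have hsY := hsne Y hY
  have hcqX : ((X ^ q) ^ q) ^ q = X := hcube X
  have hcqY : ((Y ^ q) ^ q) ^ q = Y := hcube Y
  set b := X ^ q with hb
  set c := b ^ q with hc
  set s := X + b with hs
  set e := Y ^ q with he
  set g := e ^ q with hg
  set t := Y + e with ht
  have hb0 : b ≠ 0 := by rw [hb]; exact pow_ne_zero _ hX
  have hc0 : c ≠ 0 := by rw [hc]; exact pow_ne_zero _ hb0
  have he0 : e ≠ 0 := by rw [he]; exact pow_ne_zero _ hY
  have hg0 : g ≠ 0 := by rw [hg]; exact pow_ne_zero _ he0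
  set s1 := s ^ q with hs1
  set s2 := s1 ^ q with hs2
  set t1 := t ^ q with ht1
  set t2 := t1 ^ q with ht2
  have hs10 : s1 ≠ 0 := by rw [hs1]; exact pow_ne_zero _ hsX
  have hs20 : s2 ≠ 0 := by rw [hs2]; exact pow_ne_zero _ hs10
  have ht10 : t1 ≠ 0 := by rw [ht1]; exact pow_ne_zero _ hsY
  have ht20 : t2 ≠ 0 := by rw [ht2]; exact pow_ne_zero _ ht10
  have hs2q : s2 ^ q = s := by rw [hs2, hs1]; exact hcube s
  have ht2q : t2 ^ q = t := by rw [ht2, ht1]; exact hcube t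
  have hs1e : s1 = b + c := by rw [hs1, hs, hadd, ← hb, ← hc]
  have hs2e : s2 = c + X := by rw [hs2, hs1e, hadd, ← hc, hcqX]
  have ht1e : t1 = e + g := by rw [ht1, ht, hadd, ← he, ← hg]
  have ht2e : t2 = g + Y := by rw [ht2, ht1e, hadd, ← hg, hcqY]
  set z := s2 * s * X⁻¹ with hz
  set u := t2 * t * Y⁻¹ with hu
  set vX := c * s ^ 2 * (X * b)⁻¹ with hvXd
  set vY := g * t ^ 2 * (Y * e)⁻¹ with hvYd
  clear_value vY vX u z t2 t1 s2 s1 t g e s c b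
  have hz0 : z ≠ 0 := by
    rw [hz]; exact mul_ne_zero (mul_ne_zero hs20 hsX) (inv_ne_zero hX)
  have hu0 : u ≠ 0 := by
    rw [hu]; exact mul_ne_zero (mul_ne_zero ht20 hsY) (inv_ne_zero hY)
  have hvX0 : vX ≠ 0 := by
    rw [hvXd]
    exact mul_ne_zero (mul_ne_zero hc0 (pow_ne_zero _ hsX)) (inv_ne_zero (mul_ne_zero hX hb0))
  have hvY0 : vY ≠ 0 := by
    rw [hvYd]
    exact mul_ne_zero (mul_ne_zero hg0 (pow_ne_zero _ hsY)) (inv_ne_zero (mul_ne_zero hY he0))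
  have hzq : z ^ q = s * s1 * b⁻¹ := by
    rw [hz, mul_pow, mul_pow, inv_pow, hs2q, ← hs1, ← hb]
  have hzqq : (z ^ q) ^ q = s1 * s2 * c⁻¹ := by
    rw [hzq, mul_pow, mul_pow, inv_pow, ← hs1, ← hs2, ← hc]
  have huq : u ^ q = t * t1 * e⁻¹ := by
    rw [hu, mul_pow, mul_pow, inv_pow, ht2q, ← ht1, ← he]
  have huqq : (u ^ q) ^ q = t1 * t2 * g⁻¹ := by
    rw [huq, mul_pow, mul_pow, inv_pow, ← ht1, ← ht2, ← hg]
  have hvXq : vX ^ q = X * s1 ^ 2 * (b * c)⁻¹ := by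
    rw [hvXd, mul_pow, mul_pow, inv_pow, mul_pow, hcqX, pow_right_comm, ← hs1, ← hb, ← hc]
  have hvXqq : (vX ^ q) ^ q = b * s2 ^ 2 * (c * X)⁻¹ := by
    rw [hvXq, mul_pow, mul_pow, inv_pow, mul_pow, pow_right_comm, ← hb, ← hs2, ← hc, hcqX]
  have hvYq : vY ^ q = Y * t1 ^ 2 * (e * g)⁻¹ := by
    rw [hvYd, mul_pow, mul_pow, inv_pow, mul_pow, hcqY, pow_right_comm, ← ht1, ← he, ← hg]
  have hvYqq : (vY ^ q) ^ q = e * t2 ^ 2 * (g * Y)⁻¹ := by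
    rw [hvYq, mul_pow, mul_pow, inv_pow, mul_pow, pow_right_comm, ← he, ← ht2, ← hg, hcqY]
  have P2X : z ^ 2 = (vX ^ q) ^ q * vX := by
    rw [hvXqq, hvXd, hz]; field_simp
  have P2Y : u ^ 2 = (vY ^ q) ^ q * vY := by
    rw [hvYqq, hvYd, hu]; field_simp
  have P3X : vX * ((z ^ q) ^ q) = z * z ^ q := by
    rw [hvXd, hzqq, hzq, hz]; field_simp
  have P3Y : vY * ((u ^ q) ^ q) = u * u ^ q := by
    rw [hvYd, huqq, huq, hu]; field_simp
  have hXb : X + b ≠ 0 := by rw [← hs]; exact hsX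
  have hYe : Y + e ≠ 0 := by rw [← ht]; exact hsY
  have P4X : ((z ^ q) ^ q) * (c * s1⁻¹) + z * (b * s⁻¹) = z := by
    rw [hzqq, hz, hs]; field_simp
  have P4Y : ((u ^ q) ^ q) * (g * t1⁻¹) + u * (e * t⁻¹) = u := by
    rw [huqq, hu, ht]; field_simp
  have hsq : z ^ 2 = u ^ 2 := by rw [P2X, hv, ← P2Y]
  have hcase : (z - u) * (z + u) = 0 := by linear_combination hsq
  rcases mul_eq_zero.mp hcase with hcs | hcs
  · -- z = u
    have hzu : z = u := by linear_combination hcs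
    set d := b * s⁻¹ - e * t⁻¹ with hd
    clear_value d
    by_cases hd0 : d = 0
    · -- recovery of X = Y
      have h' : b * s⁻¹ - e * t⁻¹ = 0 := hd ▸ hd0
      have hbt : b * t - s * e = 0 := by field_simp at h'; linear_combination h'
      have hbe : b * Y = e * X := by
        rw [hs, ht] at hbt; linear_combination hbt
      have hbeq : c * e = g * b := by
        have h1 : (b * Y) ^ q = (e * X) ^ q := by rw [hbe]
        rw [mul_pow, mul_pow, ← hc, ← hg, ← hb, ← he] at h1
        exact h1
      have hgx : X * g = Y * c := by
        have h1 : (c * e) ^ q = (g * b) ^ q := by rw [hbeq]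
        rw [mul_pow, mul_pow, hcqX, hcqY, ← hg, ← hc] at h1
        linear_combination h1
      have hts : t * X = s * Y := by
        rw [hs, ht]; linear_combination -hbe
      have ht2s : t2 * X = s2 * Y := by
        rw [hs2e, ht2e]; linear_combination hgx
      have hzu2 : s2 * s * X⁻¹ = t2 * t * Y⁻¹ := by rw [← hz, ← hu]; exact hzu
      have hzu3 : s2 * s * Y = t2 * t * X := by
        field_simp at hzu2; linear_combination hzu2
      have hfin : (X - Y) * (s2 * s * Y * X) = 0 := by
        linear_combination X * X * hzu3 + t * X * X * ht2s + s2 * Y * X * hts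
      have hne : s2 * s * Y * X ≠ 0 :=
        mul_ne_zero (mul_ne_zero (mul_ne_zero hs20 hsX) hY) hX
      have := (mul_eq_zero.mp hfin).resolve_right hne
      exact sub_eq_zero.mp this
    · -- kernel argument: contradiction
      exfalso
      have hdq : d ^ q = c * s1⁻¹ - g * t1⁻¹ := by
        rw [hd, sub_eq_add_neg, hadd, hneg, mul_pow, mul_pow, inv_pow, inv_pow,
          ← hc, ← hg, ← hs1, ← ht1, ← sub_eq_add_neg]
      have P4Y' := P4Y
      rw [← hzu] at P4Y'
      have E0 : ((z ^ q) ^ q) * (d ^ q) + z * d = 0 := by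
        rw [hdq, hd]; linear_combination P4X - P4Y'
      have E1 : z * ((d ^ q) ^ q) + (z ^ q) * (d ^ q) = 0 := by
        have h1 : (((z ^ q) ^ q) * (d ^ q) + z * d) ^ q = 0 := by
          rw [E0]; exact zero_pow hq0
        rw [hadd, mul_pow, mul_pow, hcube z] at h1
        exact h1
      have E2 : (z ^ q) * d + ((z ^ q) ^ q) * ((d ^ q) ^ q) = 0 := by
        have h1 : (z * ((d ^ q) ^ q) + (z ^ q) * (d ^ q)) ^ q = 0 := by
          rw [E1]; exact zero_pow hq0
        rw [hadd, mul_pow, mul_pow, hcube d] at h1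
        exact h1
      have F0 : ((z ^ q) ^ q) * (d ^ q) = -(z * d) := by linear_combination E0
      have F1 : z * ((d ^ q) ^ q) = -((z ^ q) * (d ^ q)) := by linear_combination E1
      have F2 : (z ^ q) * d = -(((z ^ q) ^ q) * ((d ^ q) ^ q)) := by linear_combination E2
      have c1 : (z * z ^ q * ((z ^ q) ^ q)) * (d * (d ^ q) * ((d ^ q) ^ q))
          = (((z ^ q) ^ q) * (d ^ q)) * (z * ((d ^ q) ^ q)) * ((z ^ q) * d) := by ring
      rw [F0, F1, F2] at c1
      have hzero : (2 : F) * ((z * z ^ q * ((z ^ q) ^ q)) * (d * (d ^ q) * ((d ^ q) ^ q))) = 0 := by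
        linear_combination c1
      have hT : (z * z ^ q * ((z ^ q) ^ q)) * (d * (d ^ q) * ((d ^ q) ^ q)) ≠ 0 :=
        mul_ne_zero
          (mul_ne_zero (mul_ne_zero hz0 (pow_ne_zero _ hz0)) (pow_ne_zero _ (pow_ne_zero _ hz0)))
          (mul_ne_zero (mul_ne_zero hd0 (pow_ne_zero _ hd0)) (pow_ne_zero _ (pow_ne_zero _ hd0)))
      rcases mul_eq_zero.mp hzero with h | h
      · exact absurd h h2
      · exact absurd h hT
  · -- z = -u : contradiction with P3
    exfalso
    have hu' : u = -z := by linear_combination hcs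
    have e1 := P3Y
    rw [hu', hneg, hneg] at e1
    have hzero : (2 : F) * (vY * ((z ^ q) ^ q)) = 0 := by
      linear_combination P3X - e1 - ((z ^ q) ^ q) * hv
    rcases mul_eq_zero.mp hzero with h | h
    · exact absurd h h2
    · rcases mul_eq_zero.mp h with h | h
      · exact absurd h hvY0
      · exact absurd h (pow_ne_zero _ (pow_ne_zero _ hz0))

theorem stmt_15 (p m : ℕ) (hp : p.Prime) (hodd : Odd p) (hm : 0 < m)
    (F : Type*) [Field F] [Fintype F] (hF : Fintype.card F = (p^m)^3) :
    Function.Bijective (fun x : F =>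
      2 * x^((p^m)^2) + x^((p^m)^2) * x * (x^(p^m))⁻¹
        + x^((p^m)^2) * x^(p^m) * x⁻¹) := by
  haveI hpf : Fact p.Prime := ⟨hp⟩
  set q := p ^ m with hqd
  have hq0 : q ≠ 0 := (pow_pos hp.pos m).ne'
  have hchar : CharP F p := by
    obtain ⟨n, hprime, hcard⟩ := FiniteField.card F (ringChar F)
    have h1 : p ∣ (ringChar F) ^ (n : ℕ) := by
      rw [← hcard, hF]
      rw [← pow_mul]
      exact dvd_pow_self p (by positivity)
    have hpd : p ∣ ringChar F := hp.dvd_of_dvd_pow h1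
    have : p = ringChar F := (Nat.prime_dvd_prime_iff_eq hp hprime).mp hpd
    rw [this]
    exact ringChar.charP F
  have h2 : (2 : F) ≠ 0 := by
    have hnd : ¬ (p ∣ 2) := by
      intro h
      have : p = 2 := (Nat.prime_dvd_prime_iff_eq hp Nat.prime_two).mp h
      rw [this] at hodd
      exact absurd hodd (by decide)
    intro h
    have h' : ((2:ℕ) : F) = 0 := by exact_mod_cast h
    exact hnd ((CharP.cast_eq_zero_iff F p 2).mp h')
  have hadd : ∀ u v : F, (u + v) ^ q = u ^ q + v ^ q := by
    intro u v
    rw [hqd]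
    exact add_pow_char_pow u v p m
  have hcube : ∀ x : F, ((x ^ q) ^ q) ^ q = x := by
    intro x
    rw [← pow_mul, ← pow_mul, show q * (q * q) = Fintype.card F from by rw [hF]; ring,
      FiniteField.pow_card]
  have hoddq : Odd q := hodd.pow
  have hneg : ∀ x : F, (-x) ^ q = -(x ^ q) := fun x => hoddq.neg_pow x
  have hsne : ∀ A : F, A ≠ 0 → A + A ^ q ≠ 0 := by
    intro A hA h
    have hb : A ^ q = -A := by linear_combination h
    have h1 : (A ^ q) ^ q = A := by rw [hb, hneg, hb, neg_neg]
    have h3 : ((A ^ q) ^ q) ^ q = -A := by rw [h1, hb]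
    have h5 : (2 : F) * A = 0 := by linear_combination (hcube A).symm.trans h3
    rcases mul_eq_zero.mp h5 with h | h
    · exact h2 h
    · exact hA h
  have hform : ∀ A : F, A ≠ 0 →
      2 * A ^ (q ^ 2) + A ^ (q ^ 2) * A * (A ^ q)⁻¹ + A ^ (q ^ 2) * A ^ q * A⁻¹
        = (A ^ q) ^ q * (A + A ^ q) ^ 2 * (A * A ^ q)⁻¹ := by
    intro A hA
    have hAq : A ^ q ≠ 0 := pow_ne_zero _ hA
    rw [sq q, pow_mul]
    field_simp
    ring
  rw [← Finite.injective_iff_bijective]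
  intro X Y hXY
  simp only at hXY
  by_cases hX : X = 0
  · by_cases hY : Y = 0
    · rw [hX, hY]
    · exfalso
      rw [hX] at hXY
      rw [hform Y hY] at hXY
      have h0 : (0:F) ^ (q ^ 2) = 0 := zero_pow (pow_ne_zero _ hq0)
      have h0q : (0:F) ^ q = 0 := zero_pow hq0
      have hzz : (Y ^ q) ^ q * (Y + Y ^ q) ^ 2 * (Y * Y ^ q)⁻¹ = 0 := by
        rw [← hXY, h0, h0q]; ring
      have : (Y ^ q) ^ q * (Y + Y ^ q) ^ 2 * (Y * Y ^ q)⁻¹ ≠ 0 :=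
        mul_ne_zero (mul_ne_zero (pow_ne_zero _ (pow_ne_zero _ hY))
          (pow_ne_zero _ (hsne Y hY)))
          (inv_ne_zero (mul_ne_zero hY (pow_ne_zero _ hY)))
      exact this hzz
  · by_cases hY : Y = 0
    · exfalso
      rw [hY] at hXY
      rw [hform X hX] at hXY
      have h0 : (0:F) ^ (q ^ 2) = 0 := zero_pow (pow_ne_zero _ hq0)
      have h0q : (0:F) ^ q = 0 := zero_pow hq0
      have hzz : (X ^ q) ^ q * (X + X ^ q) ^ 2 * (X * X ^ q)⁻¹ = 0 := by
        rw [hXY, h0, h0q]; ring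
      have : (X ^ q) ^ q * (X + X ^ q) ^ 2 * (X * X ^ q)⁻¹ ≠ 0 :=
        mul_ne_zero (mul_ne_zero (pow_ne_zero _ (pow_ne_zero _ hX))
          (pow_ne_zero _ (hsne X hX)))
          (inv_ne_zero (mul_ne_zero hX (pow_ne_zero _ hX)))
      exact this hzz
    · rw [hform X hX, hform Y hY] at hXY
      exact key_step hq0 hadd hcube h2 hneg hsne hX hY hXY
end

section
/- Let q = p^m with p an odd prime, and let f_5(X) = 2X^{q^2} + X^{q^2-q+1} + X^{q^2+q-1} on F_{q^3} (f_5(0)=0). Then for all X ∈ F_{q^3}, g(f_5(X)) = X, where g(Y) = (−Y + Y^q − Y^{q^2} + 2Y^{(q^2+1)/2})/4. In particular g is the compositional inverse of f_5. -/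
theorem stmt_16 (p m : ℕ) (hp : p.Prime) (hodd : Odd p) (hm : 0 < m)
    (F : Type*) [Field F] [Fintype F] (hF : Fintype.card F = (p^m)^3)
    (f g : F → F)
    (hf : ∀ x : F, f x = 2 * x^((p^m)^2) + x^((p^m)^2) * x * (x^(p^m))⁻¹
        + x^((p^m)^2) * x^(p^m) * x⁻¹)
    (hg : ∀ y : F, g y = (-y + y^(p^m) - y^((p^m)^2)
        + 2 * y^(((p^m)^2 + 1) / 2)) / 4) :
    ∀ x : F, g (f x) = x := by
  haveI : Fact p.Prime := ⟨hp⟩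
  intro x
  set q := p ^ m with hqdef
  have hq2 : 2 ≤ q := by
    calc 2 ≤ p := hp.two_le
    _ ≤ p ^ m := Nat.le_self_pow hm.ne' p
  have hqodd : Odd q := hodd.pow
  -- characteristic
  have hchar : CharP F p := by
    obtain ⟨n, hrp, hcard⟩ := FiniteField.card F (ringChar F)
    have hpr : p = ringChar F := by
      have hdvd : p ∣ Fintype.card F := by
        rw [hF]; exact dvd_pow (dvd_pow_self p hm.ne') (by norm_num)
      rw [hcard] at hdvd
      exact (Nat.prime_dvd_prime_iff_eq hp hrp).mp (hp.dvd_of_dvd_pow hdvd)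
    rw [hpr]; exact ringChar.charP F
  haveI := hchar
  have h4 : (4 : F) ≠ 0 := by
    have hnd : ¬ (p ∣ 4) := by
      intro hdvd
      rw [show (4:ℕ) = 2 ^ 2 by norm_num] at hdvd
      have h2 : p ∣ 2 := hp.dvd_of_dvd_pow hdvd
      have : p = 2 := (Nat.prime_dvd_prime_iff_eq hp Nat.prime_two).mp h2
      rw [this] at hodd; exact (Nat.not_odd_iff_even.mpr (by norm_num)) hodd
    have := (not_iff_not.mpr (CharP.cast_eq_zero_iff F p 4)).mpr hnd
    exact_mod_cast this
  have frob_add : ∀ z w : F, (z + w) ^ q = z ^ q + w ^ q := fun z w =>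
    add_pow_char_pow z w p m
  have pow_card : ∀ z : F, z ^ (q ^ 3) = z := fun z => by
    conv_rhs => rw [← FiniteField.pow_card z]
    rw [hF]
  -- exponent arithmetic
  set e := (q ^ 2 + 1) / 2 with hedef
  set d := (q - 1) / 2 with hddef
  have hq2odd : q ^ 2 % 2 = 1 := Nat.odd_iff.mp (hqodd.pow)
  have hqmod : q % 2 = 1 := Nat.odd_iff.mp hqodd
  have hqsq2 : 2 ≤ q ^ 2 := le_trans hq2 (Nat.le_self_pow (by norm_num) q)
  have he2 : 2 * e = q ^ 2 + 1 := by omega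
  have hd2 : 2 * d = q - 1 := by omega
  have key : 1 + q ^ 2 * e = (1 + q) * e + (q ^ 3 - 1) * d := by
    have hq3 : 1 ≤ q ^ 3 := Nat.one_le_pow _ _ (by omega)
    have hZ : (2 : ℤ) * (1 + (q : ℤ) ^ 2 * e) = 2 * ((1 + q) * e + ((q : ℤ) ^ 3 - 1) * d) := by
      have he2' : (2 : ℤ) * e = (q : ℤ) ^ 2 + 1 := by exact_mod_cast he2
      have hd2' : (2 : ℤ) * d = (q : ℤ) - 1 := by
        have h := congrArg (Nat.cast : ℕ → ℤ) hd2
        push_cast [Nat.cast_sub (by omega : 1 ≤ q)] at h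
        linarith
      linear_combination ((q : ℤ) ^ 2 - q - 1) * he2' - ((q : ℤ) ^ 3 - 1) * hd2'
    have hZ' : ((1 + q ^ 2 * e : ℕ) : ℤ) = (((1 + q) * e + (q ^ 3 - 1) * d : ℕ) : ℤ) := by
      push_cast [Nat.cast_sub hq3]
      linarith
    exact_mod_cast hZ'
  clear_value q e d
  -- zero case
  by_cases hx : x = 0
  · have hq0 : q ≠ 0 := by omega
    have hqs0 : q ^ 2 ≠ 0 := by positivity
    have he0 : e ≠ 0 := by omega
    subst hx
    rw [hf, hg]
    simp [zero_pow hq0, zero_pow hqs0, zero_pow he0]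
  -- nonzero case
  · set b := x ^ q with hbdef
    set c := x ^ (q ^ 2) with hcdef
    clear_value b c
    have hb0 : b ≠ 0 := hbdef ▸ pow_ne_zero _ hx
    have hc0 : c ≠ 0 := hcdef ▸ pow_ne_zero _ hx
    have hbq : b ^ q = c := by
      rw [hbdef, hcdef, ← pow_mul, ← pow_two]
    have hcq : c ^ q = x := by
      rw [hcdef, ← pow_mul, ← pow_succ]
      exact pow_card x
    have hx31 : x ^ (q ^ 3 - 1) = 1 := by
      have := FiniteField.pow_card_sub_one_eq_one x hx
      rwa [hF] at this
    have hy := hf x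
    rw [← hcdef, ← hbdef] at hy
    set y := f x with hydef
    clear_value y
    have hy' : y * (x * b) = c * (x + b) ^ 2 := by
      rw [hy]; field_simp; ring
    have hyq : y ^ q * (b * c) = x * (b + c) ^ 2 := by
      have h : (y * (x * b)) ^ q = (c * (x + b) ^ 2) ^ q := by rw [hy']
      rw [mul_pow, mul_pow, mul_pow, pow_right_comm, frob_add, hbq, hcq,
        ← hbdef] at h
      exact h
    have hyq2 : (y ^ q) ^ q * (c * x) = b * (c + x) ^ 2 := by
      have h : (y ^ q * (b * c)) ^ q = (x * (b + c) ^ 2) ^ q := by rw [hyq]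
      rw [mul_pow, mul_pow, mul_pow, pow_right_comm (b + c) 2 q, frob_add,
        hbq, hcq, ← hbdef] at h
      exact h
    set s := y ^ e with hsdef
    clear_value s
    have hs : x * s = (c + x) * (x + b) := by
      have hxb2 : (x + b) ^ (q ^ 2) = c + x := by
        rw [pow_two, pow_mul, frob_add, ← hbdef, hbq, frob_add, hbq, hcq]
      apply mul_right_cancel₀ (pow_ne_zero ((1 + q) * e) hx)
      have step1 : (y * (x * b)) ^ e = s * x ^ ((1 + q) * e) := by
        rw [mul_pow, mul_pow, hbdef, ← pow_mul, ← pow_add, hsdef]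
        have hee : e + q * e = (1 + q) * e := by ring
        rw [hee]
      calc x * s * x ^ ((1 + q) * e)
          = x * (y * (x * b)) ^ e := by rw [step1]; ring
        _ = x * (c * (x + b) ^ 2) ^ e := by rw [hy']
        _ = x ^ (1 + q ^ 2 * e) * ((c + x) * (x + b)) := by
            have hce : c ^ e = x ^ (q ^ 2 * e) := by rw [hcdef, ← pow_mul]
            rw [mul_pow, hce, ← pow_mul (x + b) 2 e,
              he2, pow_succ (x + b) (q ^ 2), hxb2, pow_add, pow_one]
            ring
        _ = (c + x) * (x + b) * x ^ ((1 + q) * e) := by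
            rw [key, pow_add, pow_mul, pow_mul, hx31, one_pow, mul_one]; ring
    -- final computation
    rw [hg]
    rw [div_eq_iff h4]
    have ey2 : y ^ (q ^ 2) = (y ^ q) ^ q := by rw [← pow_mul, ← pow_two]
    rw [ey2]
    have e1 : y = c * (x + b) ^ 2 / (x * b) :=
      (eq_div_iff (mul_ne_zero hx hb0)).mpr hy'
    have e2 : y ^ q = x * (b + c) ^ 2 / (b * c) :=
      (eq_div_iff (mul_ne_zero hb0 hc0)).mpr hyq
    have e3 : (y ^ q) ^ q = b * (c + x) ^ 2 / (c * x) :=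
      (eq_div_iff (mul_ne_zero hc0 hx)).mpr hyq2
    have e4 : s = (c + x) * (x + b) / x := by
      rw [eq_div_iff hx, mul_comm]; exact hs
    rw [e3, e2, ← hsdef, e4, e1]
    field_simp [hx, hb0, hc0]
    ring_nf
end

section
/- Let q > 2 be a prime power. There is no integer d with 1 ≤ d ≤ q^3 - 2, gcd(d, q^3-1) = 1, such that the multiset {d(q+1), d(q^2+1), d(2q^2+2q)} equals {1+q, 1+q^2, 2q+2} modulo q^3 - 1. -/
lemma key_17 (q m n : ℕ) (hq : 2 < q) (h : (m : ZMod (q^3-1)) = n)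
    (h1 : n < m) (h2 : m + 1 < q^3 + n) : False := by
  have hc : 27 ≤ q^3 := by
    calc (27:ℕ) = 3^3 := by norm_num
    _ ≤ q^3 := Nat.pow_le_pow_left (by omega) 3
  rw [ZMod.natCast_eq_natCast_iff] at h
  have hd : q^3 - 1 ∣ m - n := (Nat.modEq_iff_dvd' h1.le).mp h.symm
  have h5 : q^3 - 1 ≤ m - n := Nat.le_of_dvd (by omega) hd
  obtain ⟨c, hc2⟩ : ∃ c, c = q^3 := ⟨_, rfl⟩
  rw [← hc2] at hc h2 h5
  omega

set_option maxHeartbeats 2000000 in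
theorem stmt_17 (q : ℕ) (hq : 2 < q) (hpp : ∃ p n : ℕ, p.Prime ∧ 0 < n ∧ q = p^n) :
    ¬ ∃ d : ℕ, 1 ≤ d ∧ d ≤ q^3 - 2 ∧ Nat.gcd d (q^3 - 1) = 1 ∧
      ({((d*(q+1) : ℕ) : ZMod (q^3 - 1)), ((d*(q^2+1) : ℕ) : ZMod (q^3 - 1)),
          ((d*(2*q^2+2*q) : ℕ) : ZMod (q^3 - 1))} : Multiset (ZMod (q^3 - 1)))
        = ({((1+q : ℕ) : ZMod (q^3 - 1)), ((1+q^2 : ℕ) : ZMod (q^3 - 1)),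
            ((2*q+2 : ℕ) : ZMod (q^3 - 1))} : Multiset (ZMod (q^3 - 1))) := by
  rintro ⟨d, hd1, hd2, hgcd, h⟩
  have hpos : 0 < q^3 := by positivity
  have hq3 : (q : ZMod (q^3-1))^3 = 1 := by
    have h2 : ((q:ZMod (q^3-1)))^3 = ((q^3 : ℕ) : ZMod (q^3-1)) := by push_cast; ring
    rw [h2, show q^3 = (q^3 - 1) + 1 from (Nat.sub_add_cancel hpos).symm,
      Nat.cast_add, ZMod.natCast_self, Nat.cast_one, zero_add]
  have I1 : ((d*(q^2+1) : ℕ) : ZMod (q^3-1))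
      = (q:ZMod (q^3-1))^2 * ((d*(q+1):ℕ) : ZMod (q^3-1)) := by
    push_cast; linear_combination (-(d:ZMod (q^3-1))) * hq3
  have I2 : ((d*(2*q^2+2*q) : ℕ) : ZMod (q^3-1))
      = 2*(q:ZMod (q^3-1)) * ((d*(q+1):ℕ) : ZMod (q^3-1)) := by
    push_cast; ring
  have Rx : (q:ZMod (q^3-1))^2 * ((1+q:ℕ):ZMod (q^3-1)) = ((q^2+1:ℕ) : ZMod (q^3-1)) := by
    push_cast; linear_combination hq3
  have Ry : (q:ZMod (q^3-1))^2 * ((1+q^2:ℕ):ZMod (q^3-1)) = ((q^2+q:ℕ) : ZMod (q^3-1)) := by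
    push_cast; linear_combination (q:ZMod (q^3-1)) * hq3
  have Rz : (q:ZMod (q^3-1))^2 * ((2*q+2:ℕ):ZMod (q^3-1)) = ((2*q^2+2:ℕ) : ZMod (q^3-1)) := by
    push_cast; linear_combination 2 * hq3
  have Cx : 2*(q:ZMod (q^3-1)) * ((1+q:ℕ):ZMod (q^3-1)) = ((2*q^2+2*q:ℕ) : ZMod (q^3-1)) := by
    push_cast; ring
  have H : 2*q^2 + 2*q + 2 ≤ q^3 := by nlinarith [hq, sq_nonneg q]
  have hA : ((d*(q+1) : ℕ) : ZMod (q^3 - 1)) ∈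
      ({((1+q : ℕ) : ZMod (q^3 - 1)), ((1+q^2 : ℕ) : ZMod (q^3 - 1)),
        ((2*q+2 : ℕ) : ZMod (q^3 - 1))} : Multiset (ZMod (q^3 - 1))) := by
    rw [← h]; simp
  have hB : ((d*(q^2+1) : ℕ) : ZMod (q^3 - 1)) ∈
      ({((1+q : ℕ) : ZMod (q^3 - 1)), ((1+q^2 : ℕ) : ZMod (q^3 - 1)),
        ((2*q+2 : ℕ) : ZMod (q^3 - 1))} : Multiset (ZMod (q^3 - 1))) := by
    rw [← h]; simp
  have hC : ((d*(2*q^2+2*q) : ℕ) : ZMod (q^3 - 1)) ∈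
      ({((1+q : ℕ) : ZMod (q^3 - 1)), ((1+q^2 : ℕ) : ZMod (q^3 - 1)),
        ((2*q+2 : ℕ) : ZMod (q^3 - 1))} : Multiset (ZMod (q^3 - 1))) := by
    rw [← h]; simp
  simp only [Multiset.insert_eq_cons, Multiset.mem_cons, Multiset.mem_singleton] at hA hB hC
  rcases hA with hA | hA | hA <;> rcases hB with hB | hB | hB
  · -- A=x, B=x : q^2+1 ≡ 1+q
    refine key_17 q (q^2+1) (1+q) hq ?_ (by nlinarith) (by nlinarith [H])
    calc ((q^2+1:ℕ) : ZMod (q^3-1)) = (q:ZMod (q^3-1))^2 * ((1+q:ℕ):ZMod (q^3-1)) := Rx.symm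
      _ = (q:ZMod (q^3-1))^2 * ((d*(q+1):ℕ):ZMod (q^3-1)) := by rw [hA]
      _ = ((d*(q^2+1):ℕ):ZMod (q^3-1)) := I1.symm
      _ = ((1+q:ℕ):ZMod (q^3-1)) := hB
  · -- A=x, B=y : use C
    rcases hC with hC | hC | hC
    · refine key_17 q (2*q^2+2*q) (1+q) hq ?_ (by nlinarith) (by nlinarith [H])
      calc ((2*q^2+2*q:ℕ) : ZMod (q^3-1)) = 2*(q:ZMod (q^3-1)) * ((1+q:ℕ):ZMod (q^3-1)) := Cx.symm
        _ = 2*(q:ZMod (q^3-1)) * ((d*(q+1):ℕ):ZMod (q^3-1)) := by rw [hA]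
        _ = ((d*(2*q^2+2*q):ℕ):ZMod (q^3-1)) := I2.symm
        _ = ((1+q:ℕ):ZMod (q^3-1)) := hC
    · refine key_17 q (2*q^2+2*q) (1+q^2) hq ?_ (by nlinarith) (by nlinarith [H])
      calc ((2*q^2+2*q:ℕ) : ZMod (q^3-1)) = 2*(q:ZMod (q^3-1)) * ((1+q:ℕ):ZMod (q^3-1)) := Cx.symm
        _ = 2*(q:ZMod (q^3-1)) * ((d*(q+1):ℕ):ZMod (q^3-1)) := by rw [hA]
        _ = ((d*(2*q^2+2*q):ℕ):ZMod (q^3-1)) := I2.symm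
        _ = ((1+q^2:ℕ):ZMod (q^3-1)) := hC
    · refine key_17 q (2*q^2+2*q) (2*q+2) hq ?_ (by nlinarith) (by nlinarith [H])
      calc ((2*q^2+2*q:ℕ) : ZMod (q^3-1)) = 2*(q:ZMod (q^3-1)) * ((1+q:ℕ):ZMod (q^3-1)) := Cx.symm
        _ = 2*(q:ZMod (q^3-1)) * ((d*(q+1):ℕ):ZMod (q^3-1)) := by rw [hA]
        _ = ((d*(2*q^2+2*q):ℕ):ZMod (q^3-1)) := I2.symm
        _ = ((2*q+2:ℕ):ZMod (q^3-1)) := hC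
  · -- A=x, B=z : q^2+1 ≡ 2q+2
    refine key_17 q (q^2+1) (2*q+2) hq ?_ (by nlinarith) (by nlinarith [H])
    calc ((q^2+1:ℕ) : ZMod (q^3-1)) = (q:ZMod (q^3-1))^2 * ((1+q:ℕ):ZMod (q^3-1)) := Rx.symm
      _ = (q:ZMod (q^3-1))^2 * ((d*(q+1):ℕ):ZMod (q^3-1)) := by rw [hA]
      _ = ((d*(q^2+1):ℕ):ZMod (q^3-1)) := I1.symm
      _ = ((2*q+2:ℕ):ZMod (q^3-1)) := hB
  · -- A=y, B=x : q^2+q ≡ 1+q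
    refine key_17 q (q^2+q) (1+q) hq ?_ (by nlinarith) (by nlinarith [H])
    calc ((q^2+q:ℕ) : ZMod (q^3-1)) = (q:ZMod (q^3-1))^2 * ((1+q^2:ℕ):ZMod (q^3-1)) := Ry.symm
      _ = (q:ZMod (q^3-1))^2 * ((d*(q+1):ℕ):ZMod (q^3-1)) := by rw [hA]
      _ = ((d*(q^2+1):ℕ):ZMod (q^3-1)) := I1.symm
      _ = ((1+q:ℕ):ZMod (q^3-1)) := hB
  · -- A=y, B=y : q^2+q ≡ 1+q^2
    refine key_17 q (q^2+q) (1+q^2) hq ?_ (by nlinarith) (by nlinarith [H])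
    calc ((q^2+q:ℕ) : ZMod (q^3-1)) = (q:ZMod (q^3-1))^2 * ((1+q^2:ℕ):ZMod (q^3-1)) := Ry.symm
      _ = (q:ZMod (q^3-1))^2 * ((d*(q+1):ℕ):ZMod (q^3-1)) := by rw [hA]
      _ = ((d*(q^2+1):ℕ):ZMod (q^3-1)) := I1.symm
      _ = ((1+q^2:ℕ):ZMod (q^3-1)) := hB
  · -- A=y, B=z : q^2+q ≡ 2q+2
    refine key_17 q (q^2+q) (2*q+2) hq ?_ (by nlinarith) (by nlinarith [H])
    calc ((q^2+q:ℕ) : ZMod (q^3-1)) = (q:ZMod (q^3-1))^2 * ((1+q^2:ℕ):ZMod (q^3-1)) := Ry.symm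
      _ = (q:ZMod (q^3-1))^2 * ((d*(q+1):ℕ):ZMod (q^3-1)) := by rw [hA]
      _ = ((d*(q^2+1):ℕ):ZMod (q^3-1)) := I1.symm
      _ = ((2*q+2:ℕ):ZMod (q^3-1)) := hB
  · -- A=z, B=x : 2q^2+2 ≡ 1+q
    refine key_17 q (2*q^2+2) (1+q) hq ?_ (by nlinarith) (by nlinarith [H])
    calc ((2*q^2+2:ℕ) : ZMod (q^3-1)) = (q:ZMod (q^3-1))^2 * ((2*q+2:ℕ):ZMod (q^3-1)) := Rz.symm
      _ = (q:ZMod (q^3-1))^2 * ((d*(q+1):ℕ):ZMod (q^3-1)) := by rw [hA]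
      _ = ((d*(q^2+1):ℕ):ZMod (q^3-1)) := I1.symm
      _ = ((1+q:ℕ):ZMod (q^3-1)) := hB
  · -- A=z, B=y : 2q^2+2 ≡ 1+q^2
    refine key_17 q (2*q^2+2) (1+q^2) hq ?_ (by nlinarith) (by nlinarith [H])
    calc ((2*q^2+2:ℕ) : ZMod (q^3-1)) = (q:ZMod (q^3-1))^2 * ((2*q+2:ℕ):ZMod (q^3-1)) := Rz.symm
      _ = (q:ZMod (q^3-1))^2 * ((d*(q+1):ℕ):ZMod (q^3-1)) := by rw [hA]
      _ = ((d*(q^2+1):ℕ):ZMod (q^3-1)) := I1.symm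
      _ = ((1+q^2:ℕ):ZMod (q^3-1)) := hB
  · -- A=z, B=z : 2q^2+2 ≡ 2q+2
    refine key_17 q (2*q^2+2) (2*q+2) hq ?_ (by nlinarith) (by nlinarith [H])
    calc ((2*q^2+2:ℕ) : ZMod (q^3-1)) = (q:ZMod (q^3-1))^2 * ((2*q+2:ℕ):ZMod (q^3-1)) := Rz.symm
      _ = (q:ZMod (q^3-1))^2 * ((d*(q+1):ℕ):ZMod (q^3-1)) := by rw [hA]
      _ = ((d*(q^2+1):ℕ):ZMod (q^3-1)) := I1.symm
      _ = ((2*q+2:ℕ):ZMod (q^3-1)) := hB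
end

section
/- Let q > 2 be a prime power. There is no integer d with 1 ≤ d ≤ q^3 - 2, gcd(d, q^3 - 1) = 1, such that the set {2dq^2, d(q^2-q+1), d(q^2+q-1)} equals {2, q+1, q^2+1} modulo q^3 - 1. -/
theorem stmt_18 (q : ℕ) (hq : 2 < q) (hpp : ∃ p n : ℕ, p.Prime ∧ 0 < n ∧ q = p^n) :
    ¬ ∃ d : ℕ, 1 ≤ d ∧ d ≤ q^3 - 2 ∧ Nat.gcd d (q^3 - 1) = 1 ∧
      ({((2*d*q^2 : ℕ) : ZMod (q^3 - 1)), ((d*(q^2 - q + 1) : ℕ) : ZMod (q^3 - 1)),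
          ((d*(q^2 + q - 1) : ℕ) : ZMod (q^3 - 1))} : Multiset (ZMod (q^3 - 1)))
        = ({((2 : ℕ) : ZMod (q^3 - 1)), ((q+1 : ℕ) : ZMod (q^3 - 1)),
            ((q^2+1 : ℕ) : ZMod (q^3 - 1))} : Multiset (ZMod (q^3 - 1))) := by
  rintro ⟨d, hd1, hd2, hgcd, heq⟩
  set N := q ^ 3 - 1 with hN
  -- basic inequalities
  obtain ⟨u, hu⟩ : ∃ u, u = q ^ 2 := ⟨_, rfl⟩
  obtain ⟨v, hv⟩ : ∃ v, v = q ^ 3 := ⟨_, rfl⟩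
  have h1 : 3 * q ≤ u := by subst hu; nlinarith
  have h2 : 3 * u ≤ v := by subst hu; subst hv; nlinarith
  -- key : equal casts of small naturals are equal
  have key : ∀ x y : ℕ, x < N → y < N → ((x : ZMod N) = (y : ZMod N)) → x = y := by
    intro x y hx hy h
    have := (ZMod.natCast_eq_natCast_iff x y N).mp h
    rwa [Nat.ModEq, Nat.mod_eq_of_lt hx, Nat.mod_eq_of_lt hy] at this
  set a : ZMod N := ((2*d*q^2 : ℕ) : ZMod N) with ha
  set x : ZMod N := ((2 : ℕ) : ZMod N) with hx
  set y : ZMod N := ((q+1 : ℕ) : ZMod N) with hy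
  set z : ZMod N := ((q^2+1 : ℕ) : ZMod N) with hz
  -- the sum relation: b + c = a
  have habc : ((d*(q^2 - q + 1) : ℕ) : ZMod N) + ((d*(q^2 + q - 1) : ℕ) : ZMod N) = a := by
    rw [ha, ← Nat.cast_add]
    congr 1
    have : (q^2 - q + 1) + (q^2 + q - 1) = 2 * q^2 := by omega
    rw [← Nat.mul_add, this]; ring
  -- sums of both multisets agree
  have hsum : a + (((d*(q^2 - q + 1) : ℕ) : ZMod N) + ((d*(q^2 + q - 1) : ℕ) : ZMod N))
      = x + (y + z) := by
    have := congrArg Multiset.sum heq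
    simpa [add_assoc] using this
  have h2a : a + a = x + (y + z) := by rw [← hsum, habc]
  -- membership
  have hmem : a ∈ ({x, y, z} : Multiset (ZMod N)) := by
    rw [← heq]; simp
  simp only [Multiset.insert_eq_cons, Multiset.mem_cons, Multiset.mem_singleton] at hmem
  rcases hmem with h | h | h
  · -- a = x : then x = y + z, i.e. 2 ≡ q^2+q+2
    rw [h] at h2a
    have hxyz : x = y + z := add_left_cancel h2a
    have hc : ((2 : ℕ) : ZMod N) = (((q+1) + (q^2+1) : ℕ) : ZMod N) := by
      conv_rhs => rw [Nat.cast_add]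
      exact hxyz
    have := key _ _ (by omega) (by omega) hc
    omega
  · -- a = y : then y = x + z, i.e. q+1 ≡ q^2+3
    rw [h] at h2a
    have hxyz : y = x + z := by
      have h' : y + y = y + (x + z) := by rw [h2a]; ring
      exact add_left_cancel h'
    have hc : ((q+1 : ℕ) : ZMod N) = ((2 + (q^2+1) : ℕ) : ZMod N) := by
      conv_rhs => rw [Nat.cast_add]
      exact hxyz
    have := key _ _ (by omega) (by omega) hc
    omega
  · -- a = z : then z = x + y, i.e. q^2+1 ≡ q+3
    rw [h] at h2a
    have hxyz : z = x + y := by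
      have h' : z + z = z + (x + y) := by rw [h2a]; ring
      exact add_left_cancel h'
    have hc : ((q^2+1 : ℕ) : ZMod N) = ((2 + (q+1) : ℕ) : ZMod N) := by
      conv_rhs => rw [Nat.cast_add]
      exact hxyz
    have := key _ _ (by omega) (by omega) hc
    omega
end

section
/- Let q = 2^m. For every A ∈ F_q (the subfield of F_{q^3}), the equation X^{2q^2} + aX^{q^2+q-1} + aX^{q^2-q+1} = A with a ∈ F_q nonzero has the unique solution X = A^{1/2} in F_{q^3}, where A^{1/2} is the unique square root of A. -/
theorem stmt_19 (m : ℕ) (hm : 0 < m) (F : Type*) [Field F] [Fintype F]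
    (hF : Fintype.card F = (2^m)^3)
    (a : F) (haq : a^(2^m) = a) (ha0 : a ≠ 0)
    (A : F) (hA : A^(2^m) = A) :
    ∀ x : F,
      x^(2*(2^m)^2) + a * (x^((2^m)^2) * x^(2^m) * x⁻¹)
          + a * (x^((2^m)^2) * x * (x^(2^m))⁻¹) = A
        ↔ x^2 = A := by
  -- characteristic 2
  haveI hfact : Fact (Nat.Prime 2) := ⟨Nat.prime_two⟩
  have hdvd : (2:ℕ) ∣ Fintype.card F := by
    rw [hF, ← pow_mul]
    exact dvd_pow_self 2 (by positivity)
  haveI hC : CharP F 2 := by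
    have hp : (ringChar F).Prime := CharP.char_is_prime F (ringChar F)
    have h2d : (2:ℕ) ∣ ringChar F := (prime_dvd_char_iff_dvd_card 2).mpr hdvd
    exact ringChar.of_eq ((Nat.prime_dvd_prime_iff_eq Nat.prime_two hp).mp h2d).symm
  have h2 : (2:F) = 0 := by exact_mod_cast CharP.cast_eq_zero F 2
  have sqinj : ∀ u v : F, u^2 = v^2 → u = v := by
    intro u v h
    have h0 : (u - v)^2 = 0 := by linear_combination h + (v^2 - u*v) * h2
    exact sub_eq_zero.mp (pow_eq_zero_iff two_ne_zero |>.mp h0)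
  have hfr : ∀ u v : F, (u+v)^(2^m) = u^(2^m)+v^(2^m) := fun u v =>
    add_pow_char_pow u v 2 m
  have hq3 : ∀ u : F, (u^((2^m)^2))^(2^m) = u := by
    intro u
    rw [← pow_mul]
    have hc : (2^m)^2*2^m = Fintype.card F := by rw [hF]; ring
    rw [hc, FiniteField.pow_card]
  -- the Frobenius step lemma
  have step : ∀ u v w : F, u^(2^m) = v → v^(2^m) = w → w^(2^m) = u →
      u^2 + a*(u*v*w⁻¹) + a*(u*w*v⁻¹) = A →
      v^2 + a*(v*w*u⁻¹) + a*(v*u*w⁻¹) = A := by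
    intro u v w huv hvw hwu h
    have h' : (u^2 + a*(u*v*w⁻¹) + a*(u*w*v⁻¹))^(2^m) = A^(2^m) := by rw [h]
    rw [hfr, hfr] at h'
    simp only [mul_pow, inv_pow] at h'
    rw [pow_right_comm, huv, hvw, hwu, haq, hA] at h'
    exact h'
  intro x
  by_cases hx : x = 0
  · rw [hx]
    rw [zero_pow (by positivity : 2*(2^m)^2 ≠ 0), zero_pow (by positivity : (2^m)^2 ≠ 0),
      zero_pow (by positivity : 2^m ≠ 0), zero_pow (two_ne_zero)]
    simp [eq_comm]
  · set r := x^(2^m) with hr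
    set p := x^((2^m)^2) with hp
    have hr0 : r ≠ 0 := pow_ne_zero _ hx
    have hp0 : p ≠ 0 := pow_ne_zero _ hx
    have hrq : r^(2^m) = p := by rw [hr, hp, ← pow_mul, pow_two]
    have hpq : p^(2^m) = x := hq3 x
    have hxinv : x * x⁻¹ = 1 := mul_inv_cancel₀ hx
    have hrinv : r * r⁻¹ = 1 := mul_inv_cancel₀ hr0
    have hpinv : p * p⁻¹ = 1 := mul_inv_cancel₀ hp0
    have hx2q : x^(2*(2^m)^2) = p^2 := by
      rw [hp]; exact pow_mul' x 2 ((2^m)^2)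
    rw [hx2q]
    constructor
    · intro E
      have E2 : x^2 + a*(x*r*p⁻¹) + a*(x*p*r⁻¹) = A :=
        step p x r hpq hr.symm hrq (by linear_combination E)
      have E3 : r^2 + a*(r*p*x⁻¹) + a*(r*x*p⁻¹) = A :=
        step x r p hr.symm hrq hpq E2
      have hT : p^2 + x^2 + r^2 = A := by
        linear_combination E + E2 + E3 +
          (A - a*(p*r*x⁻¹) - a*(p*x*r⁻¹) - a*(x*r*p⁻¹)) * h2
      have P1 : p^2*x*r + a*p*r^2 + a*p*x^2 = A*x*r := by
        linear_combination (x*r)*E - a*p*r^2*hxinv - a*p*x^2*hrinv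
      have P2 : x^2*r*p + a*x*r^2 + a*x*p^2 = A*r*p := by
        linear_combination (r*p)*E2 - a*x*r^2*hpinv - a*x*p^2*hrinv
      have P3 : r^2*x*p + a*r*p^2 + a*r*x^2 = A*x*p := by
        linear_combination (x*p)*E3 - a*r*p^2*hxinv - a*r*x^2*hpinv
      by_cases hrp : r = p
      · have hpx : p = x := ((hrp ▸ hrq : p^(2^m) = p).symm.trans hpq)
        have hrx : r = x := hrp.trans hpx
        rw [hpx, hrx] at hT
        linear_combination hT - x^2*h2
      · have hxr : x ≠ r := by
          intro h
          exact hrp (by rw [← hrq, ← h, ← hr, h])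
        have hpx : p ≠ x := fun h => hxr (hpq.symm.trans (by rw [h, ← hr]))
        have d1 : p - x ≠ 0 := sub_ne_zero.mpr hpx
        have d2 : x - r ≠ 0 := sub_ne_zero.mpr hxr
        have d3 : r - p ≠ 0 := sub_ne_zero.mpr hrp
        have hG1 : x*r*p + a*r^2 - a*p*x + A*r = 0 := by
          have h0 : (p - x) * (x*r*p + a*r^2 - a*p*x + A*r) = 0 := by
            linear_combination P1 - P2
          exact (mul_eq_zero.mp h0).resolve_left d1
        have hG2 : x*r*p + a*p^2 - a*x*r + A*p = 0 := by
          have h0 : (x - r) * (x*r*p + a*p^2 - a*x*r + A*p) = 0 := by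
            linear_combination P2 - P3
          exact (mul_eq_zero.mp h0).resolve_left d2
        have hG3 : x*r*p + a*x^2 - a*r*p + A*x = 0 := by
          have h0 : (r - p) * (x*r*p + a*x^2 - a*r*p + A*x) = 0 := by
            linear_combination P3 - P1
          exact (mul_eq_zero.mp h0).resolve_left d3
        have hAt : a*x + a*r + a*p + A = 0 := by
          have h0 : (r - p) * (a*x + a*r + a*p + A) = 0 := by
            linear_combination hG1 - hG2
          exact (mul_eq_zero.mp h0).resolve_left d3
        have hTT : (x+r+p)*((x+r+p)+a) = 0 := by
          linear_combination hT + hAt + (x*r+x*p+r*p)*h2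
        rcases mul_eq_zero.mp hTT with ht0 | hta
        · -- trace = 0 : contradiction
          have hA0 : A = 0 := by linear_combination hAt - a * ht0
          have hae3 : a * (x*r*p) = 0 := by
            linear_combination -P1 - P2 - P3 + (x*r*p + a*(x*r+x*p+r*p))*ht0
              - (x*r+x*p+r*p)*hA0 - (a*(x*r*p))*h2
          have he3 : x*r*p = 0 := (mul_eq_zero.mp hae3).resolve_left ha0
          rcases mul_eq_zero.mp he3 with h' | h'
          · rcases mul_eq_zero.mp h' with h'' | h''
            · exact absurd h'' hx
            · exact absurd h'' hr0
          · exact absurd h' hp0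
        · -- trace = a
          have hAa : A = a^2 := by linear_combination hAt - a*hta
          by_cases hxa : x = a
          · have hrp' : r - p = 0 := by linear_combination hta - hxa - (p+a)*h2
            exact absurd (sub_eq_zero.mp hrp') hrp
          · have h0 : (x - a)*(r*p + a*x) = 0 := by
              linear_combination hG3 - x*hAa - (a^2*x)*h2
            have hrpax : r*p + a*x = 0 :=
              (mul_eq_zero.mp h0).resolve_left (sub_ne_zero.mpr hxa)
            have h1 : (r - a)*(r + x) = 0 := by
              linear_combination r*hta - hrpax - (a*r)*h2
            rcases mul_eq_zero.mp h1 with hra | hrx2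
            · have hpx0 : p - x = 0 := by linear_combination hta - hra - (x+a)*h2
              exact absurd (sub_eq_zero.mp hpx0) hpx
            · have hxr0 : x - r = 0 := by linear_combination -hrx2 + x*h2
              exact absurd (sub_eq_zero.mp hxr0) hxr
    · intro hx2
      have hr2 : r^2 = x^2 := by
        rw [hr, ← pow_mul, mul_comm (2^m) 2, pow_mul, hx2]
        exact hA
      have hrx : r = x := sqinj r x hr2
      have hpx2 : p = x := by rw [← hrq, hrx, ← hr, hrx]
      rw [hpx2, hrx]
      have hxx : x*x*x⁻¹ = x := by field_simp
      rw [hxx]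
      linear_combination hx2 + (a*x)*h2
end
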